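/- arXiv:1204.2176 — 2 statements merged into one kernel-verified Lean document; each statement's English description precedes it below -/
import Mathlib

section
/- Define B(θ, ω) = −2·(K·r·(cos(θ) − 1) + ωθ), p₂(θ, ω) = exp(−B(θ, ω))/(1 − exp(4πω))·∫₀^{2π} exp(B(u, ω) + 4πω) du + ∫₀^θ exp(B(u, ω) − B(θ, ω)) du, and e(θ, ω) = −∂θq(θ, ω)·cos(θ) + q(θ, ω)·sin(θ). Then for each ω ∈ {−ω₀, ω₀} the function θ ↦ p₂(θ, ω) is 2π-periodic and smooth, and there exists a constant c ≠ 0 such that Lp₂(θ, ω) = c·e(θ, ω) for all θ ∈ ℝ and ω ∈ {−ω₀, ω₀}. -/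
noncomputable section

open MeasureTheory

/-- `G u ω x = x·cos u + 2ωu`. -/
def G (u ω x : ℝ) : ℝ := x * Real.cos u + 2 * ω * u

/-- The unnormalized stationary profile `S(θ, ω, x)`. -/
def S (θ ω x : ℝ) : ℝ :=
  Real.exp (G θ ω x) *
    ((1 - Real.exp (4 * Real.pi * ω)) * (∫ u in (0:ℝ)..θ, Real.exp (-(G u ω x))) +
      Real.exp (4 * Real.pi * ω) * (∫ u in (0:ℝ)..(2 * Real.pi), Real.exp (-(G u ω x))))

/-- The normalization constant `Z(ω, x)`. -/
def Z (ω x : ℝ) : ℝ := ∫ θ in (0:ℝ)..(2 * Real.pi), S θ ω x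

/-- `Ψ_μ` for the binary disorder law `μ = (1/2)(δ_{-ω₀} + δ_{ω₀})`. -/
def psiMu (ω₀ x : ℝ) : ℝ :=
  (1 / 2) * ((∫ θ in (0:ℝ)..(2 * Real.pi), Real.cos θ * S θ (-ω₀) x) / Z (-ω₀) x +
    (∫ θ in (0:ℝ)..(2 * Real.pi), Real.cos θ * S θ ω₀ x) / Z ω₀ x)

/-- The stationary density `q(θ, ω) = S(θ, ω, 2Kr)/Z(ω, 2Kr)`. -/
def q (K r θ ω : ℝ) : ℝ := S θ ω (2 * K * r) / Z ω (2 * K * r)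

/-- `κ(ω) = (1 − exp(4πω))/(2 Z(ω, 2Kr))`. -/
def kap (K r ω : ℝ) : ℝ := (1 - Real.exp (4 * Real.pi * ω)) / (2 * Z ω (2 * K * r))

/-- The averaged convolution `⟨J∗h⟩_μ(θ)` for binary disorder. -/
def Jconv (K ω₀ : ℝ) (h : ℝ → ℝ → ℝ) (θ : ℝ) : ℝ :=
  -(K / 2) * ((∫ φ in (0:ℝ)..(2 * Real.pi), Real.sin φ * h (θ - φ) (-ω₀)) +
    (∫ φ in (0:ℝ)..(2 * Real.pi), Real.sin φ * h (θ - φ) ω₀))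

/-- The linearized evolution operator `L` around the stationary density `q`. -/
def Lop (K ω₀ r : ℝ) (h : ℝ → ℝ → ℝ) (θ ω : ℝ) : ℝ :=
  (1 / 2) * deriv (deriv (fun u => h u ω)) θ -
    deriv (fun u => h u ω * (Jconv K ω₀ (q K r) u + ω) + q K r u ω * Jconv K ω₀ h u) θ

/-- The exponent appearing in the explicit formula. -/
def Bf (K r θ ω : ℝ) : ℝ := -2 * (K * r * (Real.cos θ - 1) + ω * θ)

/-- The explicit function answering the Riesz-representation of the sine functional. -/
def p2 (K r : ℝ) (θ ω : ℝ) : ℝ :=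
  Real.exp (-Bf K r θ ω) / (1 - Real.exp (4 * Real.pi * ω)) *
      (∫ u in (0:ℝ)..(2 * Real.pi), Real.exp (Bf K r u ω + 4 * Real.pi * ω)) +
    ∫ u in (0:ℝ)..θ, Real.exp (Bf K r u ω - Bf K r θ ω)

/-- The function `e`. -/
def eFun (K r : ℝ) (θ ω : ℝ) : ℝ :=
  -(deriv (fun u => q K r u ω) θ) * Real.cos θ + q K r θ ω * Real.sin θ

/-! ### Auxiliary development -/

open Real Set Function intervalIntegral

namespace Stmt8Aux

/-- `E = exp(4πω)`. -/
def Ee (ω : ℝ) : ℝ := Real.exp (4 * π * ω)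

/-- `J(θ) = ∫₀^θ exp(B(u)) du`. -/
def Jf (K r ω : ℝ) : ℝ → ℝ := fun θ => ∫ u in (0:ℝ)..θ, Real.exp (Bf K r u ω)

/-- `I = ∫₀^{2π} exp(B(u)) du`. -/
def If (K r ω : ℝ) : ℝ := Jf K r ω (2 * π)

/-- `C₀ = E·I/(1−E)`. -/
def C0 (K r ω : ℝ) : ℝ := Ee ω * If K r ω / (1 - Ee ω)

lemma Ee_pos (ω : ℝ) : 0 < Ee ω := Real.exp_pos _

lemma Ee_ne_one {ω : ℝ} (hω : ω ≠ 0) : Ee ω ≠ 1 := by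
  unfold Ee
  rw [Ne, Real.exp_eq_one_iff]
  intro h
  have hπ := Real.pi_pos
  rcases mul_eq_zero.1 h with h' | h'
  · rcases mul_eq_zero.1 h' with h'' | h'' <;> [norm_num at h''; linarith]
  · exact hω h'

lemma one_sub_Ee_ne {ω : ℝ} (hω : ω ≠ 0) : 1 - Ee ω ≠ 0 :=
  sub_ne_zero.2 (Ne.symm (Ee_ne_one hω))

lemma Ee_mul_Ee_neg (ω : ℝ) : Ee ω * Real.exp (-(4 * π * ω)) = 1 := by
  rw [Ee, ← Real.exp_add]; simp

lemma exp_neg4 (ω : ℝ) : Real.exp (-(4 * π * ω)) = (Ee ω)⁻¹ := by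
  rw [Ee, Real.exp_neg]

/-- Reflection of a periodic integral over a full period. -/
lemma reflect_int (F : ℝ → ℝ) (hper : Function.Periodic F (2 * π)) :
    (∫ u in (0:ℝ)..(2 * Real.pi), F (-u)) = ∫ u in (0:ℝ)..(2 * Real.pi), F u := by
  rw [intervalIntegral.integral_comp_neg F]
  rw [show -(0:ℝ) = 0 by norm_num]
  have hshift := hper.intervalIntegral_add_eq (-(2 * π)) 0
  rw [show -(2 * π) + 2 * π = 0 by ring, zero_add] at hshift
  exact hshift

lemma contDiff_Bf (K r ω : ℝ) : ContDiff ℝ ((⊤ : ℕ∞) : WithTop ℕ∞) (fun θ => Bf K r θ ω) := by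
  have h1 : ContDiff ℝ ((⊤ : ℕ∞) : WithTop ℕ∞) (fun θ : ℝ => K * r * (Real.cos θ - 1)) :=
    contDiff_const.mul (Real.contDiff_cos.sub contDiff_const)
  have h2 : ContDiff ℝ ((⊤ : ℕ∞) : WithTop ℕ∞) (fun θ : ℝ => ω * θ) :=
    contDiff_const.mul contDiff_id
  exact contDiff_const.mul (h1.add h2)

lemma contDiff_expBf (K r ω : ℝ) : ContDiff ℝ ((⊤ : ℕ∞) : WithTop ℕ∞) (fun θ => Real.exp (Bf K r θ ω)) :=
  Real.contDiff_exp.comp (contDiff_Bf K r ω)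

lemma continuous_expBf (K r ω : ℝ) : Continuous (fun θ => Real.exp (Bf K r θ ω)) :=
  (contDiff_expBf K r ω).continuous

lemma intervalIntegrable_expBf (K r ω a b : ℝ) :
    IntervalIntegrable (fun u => Real.exp (Bf K r u ω)) MeasureTheory.volume a b :=
  (continuous_expBf K r ω).intervalIntegrable a b

lemma hasDerivAt_Bf (K r ω θ : ℝ) :
    HasDerivAt (fun u => Bf K r u ω) (2 * (K * r) * Real.sin θ - 2 * ω) θ := by
  have h1 : HasDerivAt (fun u : ℝ => K * r * (Real.cos u - 1)) (K * r * (-Real.sin θ)) θ :=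
    ((Real.hasDerivAt_cos θ).sub_const 1).const_mul (K * r)
  have h2 : HasDerivAt (fun u : ℝ => ω * u) (ω * 1) θ := (hasDerivAt_id θ).const_mul ω
  have h := (h1.add h2).const_mul (-2)
  have he : (fun u => Bf K r u ω) = fun u => -2 * (K * r * (Real.cos u - 1) + ω * u) := rfl
  rw [he]
  exact h.congr_deriv (by ring)

lemma hasDerivAt_Jf (K r ω θ : ℝ) :
    HasDerivAt (Jf K r ω) (Real.exp (Bf K r θ ω)) θ := by
  unfold Jf
  exact ((continuous_expBf K r ω).integral_hasStrictDerivAt 0 θ).hasDerivAt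

lemma Jf_nonneg (K r ω : ℝ) {θ : ℝ} (hθ : 0 ≤ θ) : 0 ≤ Jf K r ω θ :=
  intervalIntegral.integral_nonneg hθ (fun u _ => (Real.exp_pos _).le)

lemma If_pos (K r ω : ℝ) : 0 < If K r ω :=
  intervalIntegral.intervalIntegral_pos_of_pos (intervalIntegrable_expBf K r ω 0 (2 * π))
    (fun x => Real.exp_pos _) (by positivity)

lemma Jf_le_If (K r ω : ℝ) {θ : ℝ} (hθ : θ ≤ 2 * π) : Jf K r ω θ ≤ If K r ω := by
  have h := intervalIntegral.integral_add_adjacent_intervals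
    (intervalIntegrable_expBf K r ω 0 θ) (intervalIntegrable_expBf K r ω θ (2 * π))
  have h2 : 0 ≤ ∫ u in θ..(2 * π), Real.exp (Bf K r u ω) :=
    intervalIntegral.integral_nonneg hθ (fun u _ => (Real.exp_pos _).le)
  have : Jf K r ω θ + (∫ u in θ..(2 * π), Real.exp (Bf K r u ω)) = If K r ω := h
  linarith

lemma Bf_add_two_pi (K r ω u : ℝ) : Bf K r (u + 2 * π) ω = Bf K r u ω - 4 * π * ω := by
  unfold Bf
  rw [Real.cos_add_two_pi]
  ring

lemma shift_int (K r ω θ : ℝ) :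
    (∫ u in (2 * π)..(θ + 2 * π), Real.exp (Bf K r u ω))
      = Real.exp (-(4 * π * ω)) * Jf K r ω θ := by
  have h := intervalIntegral.integral_comp_add_right (a := 0) (b := θ)
    (fun u => Real.exp (Bf K r u ω)) (2 * π)
  rw [zero_add] at h
  rw [← h]
  have hpt : ∀ u : ℝ, Real.exp (Bf K r (u + 2 * π) ω)
      = Real.exp (Bf K r u ω) * Real.exp (-(4 * π * ω)) := by
    intro u
    rw [← Real.exp_add, Bf_add_two_pi]
    ring_nf
  simp_rw [hpt]
  rw [intervalIntegral.integral_mul_const]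
  unfold Jf
  ring

lemma Jf_add_two_pi (K r ω θ : ℝ) :
    Jf K r ω (θ + 2 * π) = If K r ω + Real.exp (-(4 * π * ω)) * Jf K r ω θ := by
  have h := intervalIntegral.integral_add_adjacent_intervals
    (intervalIntegrable_expBf K r ω 0 (2 * π)) (intervalIntegrable_expBf K r ω (2 * π) (θ + 2 * π))
  have : If K r ω + (∫ u in (2 * π)..(θ + 2 * π), Real.exp (Bf K r u ω)) = Jf K r ω (θ + 2 * π) := h
  rw [← this, shift_int]

lemma p2_rep (K r ω θ : ℝ) :
    p2 K r θ ω = Real.exp (-Bf K r θ ω) * (C0 K r ω + Jf K r ω θ) := by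
  unfold p2 C0 Ee If Jf
  have h1 : (∫ u in (0:ℝ)..(2 * Real.pi), Real.exp (Bf K r u ω + 4 * Real.pi * ω))
      = (∫ u in (0:ℝ)..(2 * Real.pi), Real.exp (Bf K r u ω)) * Real.exp (4 * Real.pi * ω) := by
    simp_rw [Real.exp_add]
    rw [intervalIntegral.integral_mul_const]
  have h2 : (∫ u in (0:ℝ)..θ, Real.exp (Bf K r u ω - Bf K r θ ω))
      = (∫ u in (0:ℝ)..θ, Real.exp (Bf K r u ω)) * Real.exp (-Bf K r θ ω) := by
    simp_rw [Real.exp_sub, Real.exp_neg, div_eq_mul_inv]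
    rw [intervalIntegral.integral_mul_const]
  rw [h1, h2]
  ring

lemma p2_hasDerivAt (K r ω θ : ℝ) :
    HasDerivAt (fun t => p2 K r t ω)
      (2 * (ω - K * r * Real.sin θ) * p2 K r θ ω + 1) θ := by
  have hrep : (fun t => p2 K r t ω)
      = fun t => Real.exp (-Bf K r t ω) * (C0 K r ω + Jf K r ω t) :=
    funext fun t => p2_rep K r ω t
  rw [hrep]
  have h1 : HasDerivAt (fun t => Real.exp (-Bf K r t ω))
      (Real.exp (-Bf K r θ ω) * -(2 * (K * r) * Real.sin θ - 2 * ω)) θ :=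
    (hasDerivAt_Bf K r ω θ).neg.exp
  have h2 : HasDerivAt (fun t => C0 K r ω + Jf K r ω t) (Real.exp (Bf K r θ ω)) θ :=
    (hasDerivAt_Jf K r ω θ).const_add (C0 K r ω)
  have h := h1.mul h2
  refine h.congr_deriv ?_
  rw [p2_rep, ← Real.exp_add, neg_add_cancel, Real.exp_zero]
  ring

lemma p2_contDiff (K r ω : ℝ) : ContDiff ℝ ((⊤ : ℕ∞) : WithTop ℕ∞) (fun θ => p2 K r θ ω) := by
  have hrep : (fun t => p2 K r t ω)
      = fun t => Real.exp (-Bf K r t ω) * (C0 K r ω + Jf K r ω t) :=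
    funext fun t => p2_rep K r ω t
  rw [hrep]
  have hJ : ContDiff ℝ ((⊤ : ℕ∞) : WithTop ℕ∞) (Jf K r ω) := by
    rw [contDiff_infty_iff_deriv]
    constructor
    · exact fun t => (hasDerivAt_Jf K r ω t).differentiableAt
    · have hd : deriv (Jf K r ω) = fun t => Real.exp (Bf K r t ω) :=
        funext fun t => (hasDerivAt_Jf K r ω t).deriv
      rw [hd]
      exact contDiff_expBf K r ω
  exact (Real.contDiff_exp.comp (contDiff_Bf K r ω).neg).mul (contDiff_const.add hJ)

lemma p2_periodic (K r : ℝ) {ω : ℝ} (hω : ω ≠ 0) :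
    Function.Periodic (fun θ => p2 K r θ ω) (2 * π) := by
  intro θ
  simp only
  rw [p2_rep, p2_rep, Jf_add_two_pi, Bf_add_two_pi]
  rw [show -(Bf K r θ ω - 4 * π * ω) = -Bf K r θ ω + 4 * π * ω by ring, Real.exp_add,
    exp_neg4, show Real.exp (4 * π * ω) = Ee ω from rfl]
  have h1E := one_sub_Ee_ne hω
  have hE0 : Ee ω ≠ 0 := (Ee_pos ω).ne'
  unfold C0
  field_simp
  ring

lemma S_eq (K r : ℝ) {ω : ℝ} (hω : ω ≠ 0) (θ : ℝ) :
    S θ ω (2 * K * r) = (1 - Ee ω) * p2 K r θ ω := by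
  rw [p2_rep]
  unfold S C0 Ee If Jf
  have hpt : ∀ u : ℝ, Real.exp (-G u ω (2 * K * r))
      = Real.exp (Bf K r u ω) * Real.exp (-(2 * K * r)) := by
    intro u
    rw [← Real.exp_add]
    congr 1
    unfold G Bf
    ring
  have hint1 : (∫ u in (0:ℝ)..θ, Real.exp (-G u ω (2 * K * r)))
      = (∫ u in (0:ℝ)..θ, Real.exp (Bf K r u ω)) * Real.exp (-(2 * K * r)) := by
    simp_rw [hpt]
    rw [intervalIntegral.integral_mul_const]
  have hint2 : (∫ u in (0:ℝ)..(2 * Real.pi), Real.exp (-G u ω (2 * K * r)))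
      = (∫ u in (0:ℝ)..(2 * Real.pi), Real.exp (Bf K r u ω)) * Real.exp (-(2 * K * r)) := by
    simp_rw [hpt]
    rw [intervalIntegral.integral_mul_const]
  have hG : Real.exp (G θ ω (2 * K * r)) = Real.exp (2 * K * r) * Real.exp (-Bf K r θ ω) := by
    rw [← Real.exp_add]
    congr 1
    unfold G Bf
    ring
  have h1E := one_sub_Ee_ne hω
  unfold Ee at h1E
  have hexpne : Real.exp (2 * K * r) ≠ 0 := (Real.exp_pos _).ne'
  rw [hint1, hint2, hG, show Real.exp (-(2*K*r)) = (Real.exp (2*K*r))⁻¹ from Real.exp_neg _]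
  field_simp
  ring

lemma p2_eq_S (K r : ℝ) {ω : ℝ} (hω : ω ≠ 0) (θ : ℝ) :
    p2 K r θ ω = S θ ω (2 * K * r) / (1 - Ee ω) := by
  rw [S_eq K r hω θ]
  field_simp [one_sub_Ee_ne hω]

lemma S_rep (K r : ℝ) {ω : ℝ} (hω : ω ≠ 0) (θ : ℝ) :
    S θ ω (2 * K * r)
      = Real.exp (-Bf K r θ ω) * ((1 - Ee ω) * Jf K r ω θ + Ee ω * If K r ω) := by
  rw [S_eq K r hω θ, p2_rep]
  have h1E := one_sub_Ee_ne hω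
  unfold C0
  field_simp
  ring

lemma S_continuous (K r : ℝ) {ω : ℝ} (hω : ω ≠ 0) :
    Continuous (fun θ => S θ ω (2 * K * r)) := by
  have : (fun θ => S θ ω (2 * K * r)) = fun θ => (1 - Ee ω) * p2 K r θ ω :=
    funext fun θ => S_eq K r hω θ
  rw [this]
  exact continuous_const.mul (p2_contDiff K r ω).continuous

lemma S_hasDerivAt (K r : ℝ) {ω : ℝ} (hω : ω ≠ 0) (θ : ℝ) :
    HasDerivAt (fun t => S t ω (2 * K * r))
      (2 * (ω - K * r * Real.sin θ) * S θ ω (2 * K * r) + (1 - Ee ω)) θ := by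
  have h : (fun t => S t ω (2 * K * r)) = fun t => (1 - Ee ω) * p2 K r t ω :=
    funext fun t => S_eq K r hω t
  rw [h]
  have := (p2_hasDerivAt K r ω θ).const_mul (1 - Ee ω)
  refine this.congr_deriv ?_
  rw [S_eq K r hω θ]
  ring

lemma S_periodic (K r : ℝ) {ω : ℝ} (hω : ω ≠ 0) :
    Function.Periodic (fun θ => S θ ω (2 * K * r)) (2 * π) := by
  intro θ
  simp only
  rw [S_eq K r hω, S_eq K r hω,
    show p2 K r (θ + 2 * π) ω = p2 K r θ ω from p2_periodic K r hω θ]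

lemma S_pos (K r : ℝ) {ω : ℝ} (hω : ω ≠ 0) (θ : ℝ) : 0 < S θ ω (2 * K * r) := by
  obtain ⟨y, hy, hxy⟩ := (S_periodic K r hω).exists_mem_Ico₀ (by positivity) θ
  rw [show S θ ω (2 * K * r) = S y ω (2 * K * r) from hxy, S_rep K r hω]
  have hJ0 : 0 ≤ Jf K r ω y := Jf_nonneg K r ω hy.1
  have hJI : Jf K r ω y ≤ If K r ω := Jf_le_If K r ω hy.2.le
  have hI := If_pos K r ω
  have hE := Ee_pos ω
  have hW : 0 < (1 - Ee ω) * Jf K r ω y + Ee ω * If K r ω := by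
    rcases le_or_gt (Ee ω) 1 with h | h
    · nlinarith
    · nlinarith
  positivity

lemma Z_pos (K r : ℝ) {ω : ℝ} (hω : ω ≠ 0) : 0 < Z ω (2 * K * r) := by
  unfold Z
  exact intervalIntegral.intervalIntegral_pos_of_pos
    ((S_continuous K r hω).intervalIntegrable 0 (2 * π))
    (fun x => S_pos K r hω x) (by positivity)

/-! ### Symmetry lemmas -/

lemma G_neg_neg (u ω x : ℝ) : G (-u) (-ω) x = G u ω x := by
  unfold G
  rw [Real.cos_neg]
  ring

lemma S_neg (θ ω x : ℝ) : S (-θ) (-ω) x = Real.exp (-(4 * π * ω)) * S θ ω x := by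
  unfold S
  have hG1 : G (-θ) (-ω) x = G θ ω x := G_neg_neg θ ω x
  have hpt : ∀ u : ℝ, Real.exp (-G u (-ω) x) = Real.exp (-G (-u) ω x) := by
    intro u
    have h : G u (-ω) x = G (-u) ω x := by
      have h := G_neg_neg (-u) ω x
      rwa [neg_neg] at h
    rw [h]
  have h1 : (∫ u in (0:ℝ)..(-θ), Real.exp (-G u (-ω) x))
      = -∫ u in (0:ℝ)..θ, Real.exp (-G u ω x) := by
    simp_rw [hpt]
    rw [intervalIntegral.integral_comp_neg (fun v => Real.exp (-G v ω x))]
    simp only [neg_neg, neg_zero]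
    rw [intervalIntegral.integral_symm]
  have h2 : (∫ u in (0:ℝ)..(2 * Real.pi), Real.exp (-G u (-ω) x))
      = Real.exp (4 * π * ω) * ∫ u in (0:ℝ)..(2 * Real.pi), Real.exp (-G u ω x) := by
    simp_rw [hpt]
    rw [intervalIntegral.integral_comp_neg (fun v => Real.exp (-G v ω x))]
    simp only [neg_zero]
    have h3 := intervalIntegral.integral_comp_sub_right (a := (0:ℝ)) (b := 2 * Real.pi)
      (fun v => Real.exp (-G v ω x)) (2 * Real.pi)
    rw [zero_sub, sub_self] at h3
    rw [← h3]
    have hpt2 : ∀ u : ℝ, Real.exp (-G (u - 2 * Real.pi) ω x)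
        = Real.exp (4 * π * ω) * Real.exp (-G u ω x) := by
      intro u
      rw [← Real.exp_add]
      congr 1
      unfold G
      rw [Real.cos_sub_two_pi]
      ring
    simp_rw [hpt2]
    rw [intervalIntegral.integral_const_mul]
  rw [hG1, h1, h2]
  rw [show 4 * π * -ω = -(4 * π * ω) by ring]
  have he : Real.exp (-(4 * π * ω)) * Real.exp (4 * π * ω) = 1 := by
    rw [← Real.exp_add]; simp
  linear_combination (Real.exp (G θ ω x) * (∫ u in (0:ℝ)..θ, Real.exp (-G u ω x))) * he

lemma S_neg' (K r : ℝ) (u ω : ℝ) :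
    S u (-ω) (2 * K * r) = Real.exp (-(4 * π * ω)) * S (-u) ω (2 * K * r) := by
  have h := S_neg (-u) ω (2 * K * r)
  rwa [neg_neg] at h

lemma Z_neg (K r : ℝ) {ω : ℝ} (hω : ω ≠ 0) :
    Z (-ω) (2 * K * r) = Real.exp (-(4 * π * ω)) * Z ω (2 * K * r) := by
  unfold Z
  have step : (∫ u in (0:ℝ)..(2 * Real.pi), S u (-ω) (2 * K * r))
      = ∫ u in (0:ℝ)..(2 * Real.pi),
          Real.exp (-(4 * π * ω)) * ((fun v => S v ω (2 * K * r)) (-u)) :=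
    intervalIntegral.integral_congr fun u _ => by
      simpa using S_neg' K r u ω
  rw [step, intervalIntegral.integral_const_mul,
    reflect_int (fun v => S v ω (2 * K * r)) (S_periodic K r hω)]

lemma cosS_periodic (K r : ℝ) {ω : ℝ} (hω : ω ≠ 0) :
    Function.Periodic (fun v => Real.cos v * S v ω (2 * K * r)) (2 * π) := fun v => by
  simp only
  rw [Real.cos_add_two_pi,
    show S (v + 2 * π) ω (2 * K * r) = S v ω (2 * K * r) from S_periodic K r hω v]

lemma sinS_periodic (K r : ℝ) {ω : ℝ} (hω : ω ≠ 0) :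
    Function.Periodic (fun v => Real.sin v * S v ω (2 * K * r)) (2 * π) := fun v => by
  simp only
  rw [Real.sin_add_two_pi,
    show S (v + 2 * π) ω (2 * K * r) = S v ω (2 * K * r) from S_periodic K r hω v]

lemma intCos_S_neg (K r : ℝ) {ω : ℝ} (hω : ω ≠ 0) :
    (∫ u in (0:ℝ)..(2 * Real.pi), Real.cos u * S u (-ω) (2 * K * r))
      = Real.exp (-(4 * π * ω))
        * ∫ u in (0:ℝ)..(2 * Real.pi), Real.cos u * S u ω (2 * K * r) := by
  have step : (∫ u in (0:ℝ)..(2 * Real.pi), Real.cos u * S u (-ω) (2 * K * r))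
      = ∫ u in (0:ℝ)..(2 * Real.pi),
          Real.exp (-(4 * π * ω)) * ((fun v => Real.cos v * S v ω (2 * K * r)) (-u)) :=
    intervalIntegral.integral_congr fun u _ => by
      simp only [Real.cos_neg]
      rw [S_neg' K r]
      ring
  rw [step, intervalIntegral.integral_const_mul,
    reflect_int (fun v => Real.cos v * S v ω (2 * K * r)) (cosS_periodic K r hω)]

lemma intSin_S_neg (K r : ℝ) {ω : ℝ} (hω : ω ≠ 0) :
    (∫ u in (0:ℝ)..(2 * Real.pi), Real.sin u * S u (-ω) (2 * K * r))
      = -(Real.exp (-(4 * π * ω))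
        * ∫ u in (0:ℝ)..(2 * Real.pi), Real.sin u * S u ω (2 * K * r)) := by
  have step : (∫ u in (0:ℝ)..(2 * Real.pi), Real.sin u * S u (-ω) (2 * K * r))
      = ∫ u in (0:ℝ)..(2 * Real.pi),
          Real.exp (-(4 * π * ω)) * (-((fun v => Real.sin v * S v ω (2 * K * r)) (-u))) :=
    intervalIntegral.integral_congr fun u _ => by
      simp only [Real.sin_neg]
      rw [S_neg' K r]
      ring
  rw [step, intervalIntegral.integral_const_mul, intervalIntegral.integral_neg,
    reflect_int (fun v => Real.sin v * S v ω (2 * K * r)) (sinS_periodic K r hω)]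
  ring

/-! ### The convolution computation -/

lemma conv_eq (f : ℝ → ℝ) (hf : Continuous f) (hper : Function.Periodic f (2 * π)) (u : ℝ) :
    (∫ φ in (0:ℝ)..(2 * Real.pi), Real.sin φ * f (u - φ))
      = Real.sin u * (∫ v in (0:ℝ)..(2 * Real.pi), Real.cos v * f v)
        - Real.cos u * ∫ v in (0:ℝ)..(2 * Real.pi), Real.sin v * f v := by
  have step1 : (∫ φ in (0:ℝ)..(2 * Real.pi), Real.sin φ * f (u - φ))
      = ∫ φ in (0:ℝ)..(2 * Real.pi), (fun v => Real.sin (u - v) * f v) (u - φ) := by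
    apply intervalIntegral.integral_congr
    intro φ _
    simp only
    rw [show u - (u - φ) = φ by ring]
  rw [step1, intervalIntegral.integral_comp_sub_left (fun v => Real.sin (u - v) * f v) u]
  have hFper : Function.Periodic (fun v => Real.sin (u - v) * f v) (2 * π) := by
    intro v
    simp only
    rw [show u - (v + 2 * π) = (u - v) - 2 * π by ring, Real.sin_sub_two_pi, hper v]
  have hshift := hFper.intervalIntegral_add_eq (u - 2 * π) 0
  rw [show u - 2 * π + 2 * π = u by ring, zero_add] at hshift
  rw [show u - 0 = u by ring, hshift]
  have step2 : (∫ v in (0:ℝ)..(2 * π), Real.sin (u - v) * f v)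
      = ∫ v in (0:ℝ)..(2 * π),
          (Real.sin u * (Real.cos v * f v) - Real.cos u * (Real.sin v * f v)) := by
    refine intervalIntegral.integral_congr fun v _ => ?_
    show Real.sin (u - v) * f v = _
    rw [Real.sin_sub]
    ring
  rw [step2]
  have hc1 : IntervalIntegrable (fun v => Real.sin u * (Real.cos v * f v))
      MeasureTheory.volume 0 (2 * π) :=
    (continuous_const.mul (Real.continuous_cos.mul hf)).intervalIntegrable _ _
  have hc2 : IntervalIntegrable (fun v => Real.cos u * (Real.sin v * f v))
      MeasureTheory.volume 0 (2 * π) :=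
    (continuous_const.mul (Real.continuous_sin.mul hf)).intervalIntegrable _ _
  rw [intervalIntegral.integral_sub hc1 hc2, intervalIntegral.integral_const_mul,
    intervalIntegral.integral_const_mul]

/-! ### `Jconv` computations -/

lemma q_div (K r ω : ℝ) (g : ℝ → ℝ) :
    (∫ v in (0:ℝ)..(2 * Real.pi), g v * q K r v ω)
      = (∫ v in (0:ℝ)..(2 * Real.pi), g v * S v ω (2 * K * r)) / Z ω (2 * K * r) := by
  unfold q
  simp_rw [div_eq_mul_inv, ← mul_assoc]
  rw [intervalIntegral.integral_mul_const]

lemma q_continuous (K r : ℝ) {ω : ℝ} (hω : ω ≠ 0) : Continuous (fun θ => q K r θ ω) := by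
  unfold q
  exact (S_continuous K r hω).div_const _

lemma q_periodic (K r : ℝ) {ω : ℝ} (hω : ω ≠ 0) :
    Function.Periodic (fun θ => q K r θ ω) (2 * π) := by
  intro θ
  unfold q
  simp only
  rw [show S (θ + 2 * π) ω (2 * K * r) = S θ ω (2 * K * r) from S_periodic K r hω θ]

lemma p2_div (K r : ℝ) {ω : ℝ} (hω : ω ≠ 0) (g : ℝ → ℝ) :
    (∫ v in (0:ℝ)..(2 * Real.pi), g v * p2 K r v ω)
      = (∫ v in (0:ℝ)..(2 * Real.pi), g v * S v ω (2 * K * r)) / (1 - Ee ω) := by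
  have hpt : ∀ v, g v * p2 K r v ω = (g v * S v ω (2 * K * r)) * (1 - Ee ω)⁻¹ := by
    intro v
    rw [p2_eq_S K r hω]
    field_simp
  simp_rw [hpt]
  rw [intervalIntegral.integral_mul_const, div_eq_mul_inv]

lemma conv_eq' (h : ℝ → ℝ → ℝ) (ω' : ℝ) (hf : Continuous (fun v => h v ω'))
    (hper : Function.Periodic (fun v => h v ω') (2 * π)) (u : ℝ) :
    (∫ φ in (0:ℝ)..(2 * Real.pi), Real.sin φ * h (u - φ) ω')
      = Real.sin u * (∫ v in (0:ℝ)..(2 * Real.pi), Real.cos v * h v ω')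
        - Real.cos u * ∫ v in (0:ℝ)..(2 * Real.pi), Real.sin v * h v ω' :=
  conv_eq (fun v => h v ω') hf hper u

lemma p2_continuous (K r ω : ℝ) : Continuous (fun θ => p2 K r θ ω) :=
  (p2_contDiff K r ω).continuous

lemma intCos_q_sum (K ω₀ r : ℝ) (hfix : r = psiMu ω₀ (2 * K * r)) :
    (∫ v in (0:ℝ)..(2 * Real.pi), Real.cos v * q K r v (-ω₀))
      + (∫ v in (0:ℝ)..(2 * Real.pi), Real.cos v * q K r v ω₀) = 2 * r := by
  rw [q_div, q_div]
  unfold psiMu at hfix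
  linarith

lemma intSin_q_sum (K r : ℝ) {ω₀ : ℝ} (hω : ω₀ ≠ 0) :
    (∫ v in (0:ℝ)..(2 * Real.pi), Real.sin v * q K r v (-ω₀))
      + (∫ v in (0:ℝ)..(2 * Real.pi), Real.sin v * q K r v ω₀) = 0 := by
  rw [q_div, q_div, Z_neg K r hω, intSin_S_neg K r hω]
  have hZ : Z ω₀ (2 * K * r) ≠ 0 := (Z_pos K r hω).ne'
  have he : Real.exp (-(4 * π * ω₀)) ≠ 0 := (Real.exp_pos _).ne'
  field_simp
  ring

lemma Jconv_q (K ω₀ r : ℝ) (hω : ω₀ ≠ 0) (hfix : r = psiMu ω₀ (2 * K * r)) (u : ℝ) :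
    Jconv K ω₀ (q K r) u = -(K * r) * Real.sin u := by
  unfold Jconv
  have hneg : (-ω₀ : ℝ) ≠ 0 := neg_ne_zero.2 hω
  rw [conv_eq' (q K r) (-ω₀) (q_continuous K r hneg) (q_periodic K r hneg) u,
    conv_eq' (q K r) ω₀ (q_continuous K r hω) (q_periodic K r hω) u]
  have hC := intCos_q_sum K ω₀ r hfix
  have hS := intSin_q_sum K r hω
  linear_combination (-(K / 2) * Real.sin u) * hC + (K / 2 * Real.cos u) * hS

lemma Ee_neg (ω : ℝ) : Ee (-ω) = (Ee ω)⁻¹ := by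
  rw [show Ee (-ω) = Real.exp (4 * π * -ω) from rfl,
    show (4:ℝ) * π * -ω = -(4 * π * ω) by ring, exp_neg4]

lemma intCos_p2_sum (K r : ℝ) {ω₀ : ℝ} (hω : ω₀ ≠ 0) :
    (∫ v in (0:ℝ)..(2 * Real.pi), Real.cos v * p2 K r v (-ω₀))
      + (∫ v in (0:ℝ)..(2 * Real.pi), Real.cos v * p2 K r v ω₀) = 0 := by
  have hneg : (-ω₀ : ℝ) ≠ 0 := neg_ne_zero.2 hω
  rw [p2_div K r hneg, p2_div K r hω, intCos_S_neg K r hω, Ee_neg, exp_neg4]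
  have hE0 : Ee ω₀ ≠ 0 := (Ee_pos ω₀).ne'
  have h1E : 1 - Ee ω₀ ≠ 0 := one_sub_Ee_ne hω
  have hid : 1 - (Ee ω₀)⁻¹ = (Ee ω₀)⁻¹ * (Ee ω₀ - 1) := by
    field_simp
  rw [hid, mul_div_mul_left _ _ (inv_ne_zero hE0),
    show (1 - Ee ω₀) = -(Ee ω₀ - 1) by ring, div_neg, add_neg_cancel]

lemma intSin_p2_eq (K r : ℝ) {ω₀ : ℝ} (hω : ω₀ ≠ 0) :
    (∫ v in (0:ℝ)..(2 * Real.pi), Real.sin v * p2 K r v (-ω₀))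
      = ∫ v in (0:ℝ)..(2 * Real.pi), Real.sin v * p2 K r v ω₀ := by
  have hneg : (-ω₀ : ℝ) ≠ 0 := neg_ne_zero.2 hω
  rw [p2_div K r hneg, p2_div K r hω, intSin_S_neg K r hω, Ee_neg, exp_neg4]
  have hE0 : Ee ω₀ ≠ 0 := (Ee_pos ω₀).ne'
  have h1E : 1 - Ee ω₀ ≠ 0 := one_sub_Ee_ne hω
  have hid : 1 - (Ee ω₀)⁻¹ = (Ee ω₀)⁻¹ * (Ee ω₀ - 1) := by
    field_simp
  rw [hid, neg_div, mul_div_mul_left _ _ (inv_ne_zero hE0),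
    show (1 - Ee ω₀) = -(Ee ω₀ - 1) by ring, div_neg]

lemma Jconv_p2 (K ω₀ r : ℝ) (hω : ω₀ ≠ 0) (u : ℝ) :
    Jconv K ω₀ (p2 K r) u
      = (K * ∫ v in (0:ℝ)..(2 * Real.pi), Real.sin v * p2 K r v ω₀) * Real.cos u := by
  unfold Jconv
  have hneg : (-ω₀ : ℝ) ≠ 0 := neg_ne_zero.2 hω
  rw [conv_eq' (p2 K r) (-ω₀) (p2_continuous K r (-ω₀)) (p2_periodic K r hneg) u,
    conv_eq' (p2 K r) ω₀ (p2_continuous K r ω₀) (p2_periodic K r hω) u]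
  have hC := intCos_p2_sum K r hω
  have hS := intSin_p2_eq K r hω
  linear_combination (-(K / 2) * Real.sin u) * hC + (K / 2 * Real.cos u) * hS

lemma intSin_S_val (K r : ℝ) {ω : ℝ} (hω : ω ≠ 0) :
    2 * (K * r) * (∫ t in (0:ℝ)..(2 * Real.pi), Real.sin t * S t ω (2 * K * r))
      = 2 * ω * Z ω (2 * K * r) + 2 * π * (1 - Ee ω) := by
  have hcont := S_continuous K r hω
  have hder : ∀ t ∈ uIcc (0:ℝ) (2 * π), HasDerivAt (fun t => S t ω (2 * K * r))
      (2 * (ω - K * r * Real.sin t) * S t ω (2 * K * r) + (1 - Ee ω)) t :=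
    fun t _ => S_hasDerivAt K r hω t
  have hint : IntervalIntegrable
      (fun t => 2 * (ω - K * r * Real.sin t) * S t ω (2 * K * r) + (1 - Ee ω))
      MeasureTheory.volume 0 (2 * π) := by
    apply Continuous.intervalIntegrable
    exact ((continuous_const.mul (continuous_const.sub
      (continuous_const.mul Real.continuous_sin))).mul hcont).add continuous_const
  have hFTC := intervalIntegral.integral_eq_sub_of_hasDerivAt hder hint
  have hper : S (2 * π) ω (2 * K * r) = S 0 ω (2 * K * r) := by
    have := S_periodic K r hω 0
    simpa using this
  replace hFTC : (∫ t in (0:ℝ)..(2 * π),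
      (2 * (ω - K * r * Real.sin t) * S t ω (2 * K * r) + (1 - Ee ω))) = 0 := by
    rw [hFTC]
    show S (2 * π) ω _ - S 0 ω _ = 0
    rw [hper, sub_self]
  have hi1 : IntervalIntegrable (fun t => 2 * ω * S t ω (2 * K * r))
      MeasureTheory.volume 0 (2 * π) :=
    (continuous_const.mul hcont).intervalIntegrable _ _
  have hi2 : IntervalIntegrable (fun t => 2 * (K * r) * (Real.sin t * S t ω (2 * K * r)))
      MeasureTheory.volume 0 (2 * π) :=
    (continuous_const.mul (Real.continuous_sin.mul hcont)).intervalIntegrable _ _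
  have hsplit : (∫ t in (0:ℝ)..(2 * π),
      (2 * (ω - K * r * Real.sin t) * S t ω (2 * K * r) + (1 - Ee ω)))
      = ((∫ t in (0:ℝ)..(2 * π), 2 * ω * S t ω (2 * K * r))
          - ∫ t in (0:ℝ)..(2 * π), 2 * (K * r) * (Real.sin t * S t ω (2 * K * r)))
        + ∫ t in (0:ℝ)..(2 * π), (1 - Ee ω) := by
    rw [← intervalIntegral.integral_sub hi1 hi2,
      ← intervalIntegral.integral_add (hi1.sub hi2) (intervalIntegrable_const)]
    apply intervalIntegral.integral_congr
    intro t _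
    ring
  rw [hsplit, intervalIntegral.integral_const_mul, intervalIntegral.integral_const_mul,
    intervalIntegral.integral_const] at hFTC
  have hZdef : (∫ t in (0:ℝ)..(2 * π), S t ω (2 * K * r)) = Z ω (2 * K * r) := rfl
  rw [hZdef, smul_eq_mul, sub_zero] at hFTC
  linarith

/-! ### The double-integral machinery for the strict inequality -/

/-- The function `g(θ,s) = −2Kr(cos(θ+s) − cos θ)`. -/
def gf (K r : ℝ) (z : ℝ × ℝ) : ℝ := -(2 * (K * r)) * (Real.cos (z.1 + z.2) - Real.cos z.1)

/-- `F2(z) = E·exp(−2ω z₂)`. -/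
def F2 (ω : ℝ) (z : ℝ × ℝ) : ℝ := Ee ω * Real.exp (-(2 * ω * z.2))

/-- `F1(z) = E·exp(−2ω z₂ + g z)`. -/
def F1 (K r ω : ℝ) (z : ℝ × ℝ) : ℝ := Ee ω * Real.exp (-(2 * ω * z.2) + gf K r z)

/-- `F3 = F2·g`. -/
def F3 (K r ω : ℝ) (z : ℝ × ℝ) : ℝ := F2 ω z * gf K r z

/-- `Φ = F2·(exp g − 1 − g)`. -/
def Phi (K r ω : ℝ) (z : ℝ × ℝ) : ℝ := F2 ω z * (Real.exp (gf K r z) - 1 - gf K r z)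

/-- The swap of `F3`. -/
def F3s (K r ω : ℝ) : ℝ × ℝ → ℝ := fun z => F3 K r ω (z.2, z.1)

lemma gf_cont (K r : ℝ) : Continuous (gf K r) := by unfold gf; fun_prop

lemma F2_cont (ω : ℝ) : Continuous (F2 ω) := by unfold F2; fun_prop

lemma F1_cont (K r ω : ℝ) : Continuous (F1 K r ω) := by unfold F1 gf; fun_prop

lemma F3_cont (K r ω : ℝ) : Continuous (F3 K r ω) := (F2_cont ω).mul (gf_cont K r)

lemma F3s_cont (K r ω : ℝ) : Continuous (F3s K r ω) :=
  (F3_cont K r ω).comp (continuous_snd.prodMk continuous_fst)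

lemma Phi_cont (K r ω : ℝ) : Continuous (Phi K r ω) :=
  (F2_cont ω).mul (((Real.continuous_exp.comp (gf_cont K r)).sub continuous_const).sub
    (gf_cont K r))

lemma integrableOn_rect {F : ℝ × ℝ → ℝ} (hF : Continuous F) :
    MeasureTheory.IntegrableOn F (Ioc (0:ℝ) (2 * π) ×ˢ Ioc (0:ℝ) (2 * π))
      MeasureTheory.volume := by
  have hc : IsCompact (Icc (0:ℝ) (2 * π) ×ˢ Icc (0:ℝ) (2 * π)) :=
    isCompact_Icc.prod isCompact_Icc
  exact (hF.continuousOn.integrableOn_compact hc).mono_set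
    (Set.prod_mono Ioc_subset_Icc_self Ioc_subset_Icc_self)

lemma double_eq (F : ℝ × ℝ → ℝ) (hF : Continuous F) :
    (∫ z in Ioc (0:ℝ) (2 * π) ×ˢ Ioc (0:ℝ) (2 * π), F z)
      = ∫ θ in (0:ℝ)..(2 * π), ∫ s in (0:ℝ)..(2 * π), F (θ, s) := by
  have h2π : (0:ℝ) ≤ 2 * π := by positivity
  rw [MeasureTheory.Measure.volume_eq_prod, MeasureTheory.setIntegral_prod _
    (by rw [← MeasureTheory.Measure.volume_eq_prod]; exact integrableOn_rect hF)]
  simp_rw [intervalIntegral.integral_of_le h2π]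

lemma double_swap (F : ℝ × ℝ → ℝ) :
    (∫ z in Ioc (0:ℝ) (2 * π) ×ˢ Ioc (0:ℝ) (2 * π), F z)
      = ∫ z in Ioc (0:ℝ) (2 * π) ×ˢ Ioc (0:ℝ) (2 * π), F (z.2, z.1) := by
  rw [MeasureTheory.Measure.volume_eq_prod, ← MeasureTheory.Measure.prod_restrict,
    ← MeasureTheory.integral_prod_swap, MeasureTheory.Measure.prod_restrict,
    ← MeasureTheory.Measure.volume_eq_prod]
  rfl

lemma int_exp_neg {ω : ℝ} (hω : ω ≠ 0) :
    (∫ s in (0:ℝ)..(2 * π), Real.exp (-(2 * ω * s)))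
      = (1 - Real.exp (-(4 * π * ω))) / (2 * ω) := by
  have hder : ∀ s ∈ uIcc (0:ℝ) (2 * π),
      HasDerivAt (fun s => -(1 / (2 * ω)) * Real.exp (-(2 * ω * s)))
        (Real.exp (-(2 * ω * s))) s := by
    intro s _
    have h0 : (fun s : ℝ => -(2 * ω * s)) = fun s : ℝ => -(2 * ω) * s :=
      funext fun s => by ring
    have h1 : HasDerivAt (fun s : ℝ => -(2 * ω * s)) (-(2 * ω)) s := by
      rw [h0]
      simpa using (hasDerivAt_id s).const_mul (-(2 * ω))
    have h2 := h1.exp.const_mul (-(1 / (2 * ω)))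
    exact h2.congr_deriv (by field_simp)
  have hcont : Continuous (fun s : ℝ => Real.exp (-(2 * ω * s))) := by fun_prop
  have hFTC := intervalIntegral.integral_eq_sub_of_hasDerivAt hder
    (hcont.intervalIntegrable _ _)
  rw [hFTC]
  show -(1 / (2 * ω)) * Real.exp (-(2 * ω * (2 * π)))
      - -(1 / (2 * ω)) * Real.exp (-(2 * ω * 0)) = _
  rw [show -(2 * ω * (2 * π)) = -(4 * π * ω) by ring, show -(2 * ω * 0) = (0:ℝ) by ring,
    Real.exp_zero]
  field_simp
  ring

lemma int_cos_shift (s : ℝ) :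
    (∫ t in (0:ℝ)..(2 * π), (Real.cos (t + s) - Real.cos t)) = 0 := by
  rw [intervalIntegral.integral_sub
    ((by fun_prop : Continuous fun t : ℝ => Real.cos (t + s)).intervalIntegrable _ _)
    (Real.continuous_cos.intervalIntegrable _ _)]
  rw [intervalIntegral.integral_comp_add_right Real.cos s, integral_cos, integral_cos]
  rw [zero_add, show 2 * π + s = s + 2 * π by ring, Real.sin_add_two_pi]
  simp [Real.sin_two_pi]

lemma S_conv_rep (K r : ℝ) {ω : ℝ} (hω : ω ≠ 0) (θ : ℝ) :
    S θ ω (2 * K * r)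
      = ∫ s in (0:ℝ)..(2 * π), Ee ω * Real.exp (Bf K r (θ + s) ω - Bf K r θ ω) := by
  rw [S_rep K r hω]
  have hsplit1 : Jf K r ω θ + (∫ u in θ..(2 * π), Real.exp (Bf K r u ω)) = If K r ω :=
    intervalIntegral.integral_add_adjacent_intervals
      (intervalIntegrable_expBf K r ω 0 θ) (intervalIntegrable_expBf K r ω θ (2 * π))
  have hsplit2 : (∫ u in θ..(2 * π), Real.exp (Bf K r u ω))
      + (∫ u in (2 * π)..(θ + 2 * π), Real.exp (Bf K r u ω))
      = ∫ u in θ..(θ + 2 * π), Real.exp (Bf K r u ω) :=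
    intervalIntegral.integral_add_adjacent_intervals
      (intervalIntegrable_expBf K r ω θ (2 * π)) (intervalIntegrable_expBf K r ω (2 * π) _)
  have hshift := shift_int K r ω θ
  have hpt : ∀ s : ℝ, Ee ω * Real.exp (Bf K r (θ + s) ω - Bf K r θ ω)
      = Real.exp (Bf K r (θ + s) ω) * (Ee ω * Real.exp (-Bf K r θ ω)) := by
    intro s
    rw [Real.exp_sub, Real.exp_neg]
    ring
  simp_rw [hpt]
  rw [intervalIntegral.integral_mul_const]
  have hcomp := intervalIntegral.integral_comp_add_left (a := (0:ℝ)) (b := 2 * π)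
    (fun u => Real.exp (Bf K r u ω)) θ
  rw [add_zero] at hcomp
  rw [hcomp]
  have he := Ee_mul_Ee_neg ω
  rw [← hsplit2, hshift, show (∫ u in θ..(2 * π), Real.exp (Bf K r u ω))
    = If K r ω - Jf K r ω θ by linarith]
  linear_combination (-(Real.exp (-Bf K r θ ω) * Jf K r ω θ)) * he

lemma Bf_diff (K r ω θ s : ℝ) :
    Bf K r (θ + s) ω - Bf K r θ ω
      = -(2 * ω * s) + -(2 * (K * r)) * (Real.cos (θ + s) - Real.cos θ) := by
  unfold Bf
  ring

lemma Z_gt (K r : ℝ) {ω : ℝ} (hK : 0 < K) (hr : 0 < r) (hω : 0 < ω) :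
    π * (Ee ω - 1) < ω * Z ω (2 * K * r) := by
  have hωne : ω ≠ 0 := hω.ne'
  have hR : (0:ℝ) < 2 * π := by positivity
  -- (A) Z as double integral of F1
  have hZ : Z ω (2 * K * r)
      = ∫ z in Ioc (0:ℝ) (2 * π) ×ˢ Ioc (0:ℝ) (2 * π), F1 K r ω z := by
    rw [double_eq _ (F1_cont K r ω)]
    unfold Z
    refine intervalIntegral.integral_congr fun θ _ => ?_
    rw [S_conv_rep K r hωne θ]
    refine intervalIntegral.integral_congr fun s _ => ?_
    unfold F1 gf
    rw [Bf_diff]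
  -- (B) the F2 integral
  have hB : (∫ z in Ioc (0:ℝ) (2 * π) ×ˢ Ioc (0:ℝ) (2 * π), F2 ω z)
      = π * (Ee ω - 1) / ω := by
    rw [double_eq _ (F2_cont ω)]
    have hinner : ∀ θ : ℝ, (∫ s in (0:ℝ)..(2 * π), F2 ω (θ, s))
        = Ee ω * ((1 - Real.exp (-(4 * π * ω))) / (2 * ω)) := by
      intro θ
      have : ∀ s : ℝ, F2 ω (θ, s) = Ee ω * Real.exp (-(2 * ω * s)) := fun s => rfl
      simp_rw [this]
      rw [intervalIntegral.integral_const_mul, int_exp_neg hωne]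
    rw [intervalIntegral.integral_congr (g := fun _ =>
      Ee ω * ((1 - Real.exp (-(4 * π * ω))) / (2 * ω))) (fun θ _ => hinner θ)]
    rw [intervalIntegral.integral_const, smul_eq_mul, sub_zero]
    have he := Ee_mul_Ee_neg ω
    rw [eq_div_iff hωne]
    field_simp
    rw [show π * 4 * ω = 4 * π * ω by ring]
    linear_combination (-1) * he
  -- (C) the F3 integral vanishes
  have hC : (∫ z in Ioc (0:ℝ) (2 * π) ×ˢ Ioc (0:ℝ) (2 * π), F3 K r ω z) = 0 := by
    rw [double_swap (F3 K r ω),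
      show (∫ z in Ioc (0:ℝ) (2 * π) ×ˢ Ioc (0:ℝ) (2 * π), F3 K r ω (z.2, z.1))
        = ∫ z in Ioc (0:ℝ) (2 * π) ×ˢ Ioc (0:ℝ) (2 * π), F3s K r ω z from rfl,
      double_eq _ (F3s_cont K r ω)]
    have hinner : ∀ θ : ℝ, (∫ s in (0:ℝ)..(2 * π), F3s K r ω (θ, s)) = 0 := by
      intro θ
      have hptt : ∀ s : ℝ, F3s K r ω (θ, s)
          = (Ee ω * Real.exp (-(2 * ω * θ)) * -(2 * (K * r)))
            * (Real.cos (s + θ) - Real.cos s) := by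
        intro s
        simp only [F3s, F3, F2, gf]
        ring
      simp_rw [hptt]
      rw [intervalIntegral.integral_const_mul, int_cos_shift, mul_zero]
    rw [intervalIntegral.integral_congr (g := fun _ => (0:ℝ)) (fun θ _ => hinner θ)]
    simp
  -- (D) decomposition
  have hiΦ := integrableOn_rect (Phi_cont K r ω)
  have hiF2 := integrableOn_rect (F2_cont ω)
  have hiF3 := integrableOn_rect (F3_cont K r ω)
  have hdecomp : (∫ z in Ioc (0:ℝ) (2 * π) ×ˢ Ioc (0:ℝ) (2 * π), F1 K r ω z)
      = (∫ z in Ioc (0:ℝ) (2 * π) ×ˢ Ioc (0:ℝ) (2 * π), Phi K r ω z)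
        + (∫ z in Ioc (0:ℝ) (2 * π) ×ˢ Ioc (0:ℝ) (2 * π), F2 ω z)
        + ∫ z in Ioc (0:ℝ) (2 * π) ×ˢ Ioc (0:ℝ) (2 * π), F3 K r ω z := by
    have hpt : ∀ z : ℝ × ℝ, F1 K r ω z = Phi K r ω z + F2 ω z + F3 K r ω z := by
      intro z
      simp only [F1, Phi, F2, F3, gf]
      rw [Real.exp_add]
      ring
    have hadd : MeasureTheory.IntegrableOn (fun z => Phi K r ω z + F2 ω z)
        (Ioc (0:ℝ) (2 * π) ×ˢ Ioc (0:ℝ) (2 * π)) MeasureTheory.volume := hiΦ.add hiF2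
    rw [MeasureTheory.integral_congr_ae (Filter.Eventually.of_forall fun z => hpt z),
      MeasureTheory.integral_add hadd hiF3, MeasureTheory.integral_add hiΦ hiF2]
  -- (E) positivity of the Phi integral
  have hpos : 0 < ∫ z in Ioc (0:ℝ) (2 * π) ×ˢ Ioc (0:ℝ) (2 * π), Phi K r ω z := by
    have hnn : ∀ z : ℝ × ℝ, 0 ≤ Phi K r ω z := by
      intro z
      have h1 : 0 < F2 ω z := mul_pos (Ee_pos ω) (Real.exp_pos _)
      have h2 : 0 ≤ Real.exp (gf K r z) - 1 - gf K r z := by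
        nlinarith [Real.add_one_le_exp (gf K r z)]
      exact mul_nonneg h1.le h2
    rw [MeasureTheory.setIntegral_pos_iff_support_of_nonneg_ae
      (Filter.Eventually.of_forall fun z => hnn z) hiΦ]
    have hz0 : 0 < Phi K r ω (π, π) := by
      have hgval : gf K r (π, π) = -(4 * (K * r)) := by
        unfold gf
        simp only
        rw [show π + π = 2 * π by ring, Real.cos_two_pi, Real.cos_pi]
        ring
      have hgne : gf K r (π, π) ≠ 0 := by
        rw [hgval]
        nlinarith
      have h2 : 0 < Real.exp (gf K r (π, π)) - 1 - gf K r (π, π) := by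
        nlinarith [Real.add_one_lt_exp hgne]
      exact mul_pos (mul_pos (Ee_pos ω) (Real.exp_pos _)) h2
    have hopen : IsOpen ({z : ℝ × ℝ | 0 < Phi K r ω z}
        ∩ Ioo (0:ℝ) (2 * π) ×ˢ Ioo (0:ℝ) (2 * π)) :=
      (isOpen_lt continuous_const (Phi_cont K r ω)).inter (isOpen_Ioo.prod isOpen_Ioo)
    have hπmem : ((π:ℝ), (π:ℝ)) ∈ ({z : ℝ × ℝ | 0 < Phi K r ω z}
        ∩ Ioo (0:ℝ) (2 * π) ×ˢ Ioo (0:ℝ) (2 * π)) := by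
      refine ⟨hz0, ⟨⟨Real.pi_pos, ?_⟩, ⟨Real.pi_pos, ?_⟩⟩⟩ <;>
        nlinarith [Real.pi_pos]
    obtain ⟨ε, hε, hball⟩ := Metric.isOpen_iff.mp hopen _ hπmem
    have hsub : Metric.ball ((π:ℝ), (π:ℝ)) ε
        ⊆ support (Phi K r ω) ∩ Ioc (0:ℝ) (2 * π) ×ˢ Ioc (0:ℝ) (2 * π) := by
      refine hball.trans ?_
      rintro z ⟨h1, h2⟩
      exact ⟨(show (0:ℝ) < Phi K r ω z from h1).ne',
        Set.prod_mono Ioo_subset_Ioc_self Ioo_subset_Ioc_self h2⟩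
    calc (0 : ENNReal) < MeasureTheory.volume (Metric.ball ((π:ℝ), (π:ℝ)) ε) :=
          Metric.measure_ball_pos _ _ hε
      _ ≤ _ := MeasureTheory.measure_mono hsub
  -- conclude
  have hfin : π * (Ee ω - 1) / ω < Z ω (2 * K * r) := by
    rw [hZ, hdecomp, hC, ← hB]
    linarith
  have := (div_lt_iff₀ hω).mp hfin
  linarith

lemma cst_ne (K ω₀ r : ℝ) (hK : 0 < K) (hω₀ : 0 < ω₀) (hr : 0 < r) :
    K * (∫ v in (0:ℝ)..(2 * Real.pi), Real.sin v * p2 K r v ω₀) ≠ 0 := by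
  have hωne : ω₀ ≠ 0 := hω₀.ne'
  have hsin := intSin_S_val K r hωne
  have hZgt := Z_gt K r hK hr hω₀
  have h1E := one_sub_Ee_ne hωne
  rw [p2_div K r hωne]
  intro h
  rcases mul_eq_zero.1 h with h' | h'
  · exact hK.ne' h'
  · rw [div_eq_zero_iff] at h'
    rcases h' with h'' | h''
    · rw [h''] at hsin
      nlinarith [Real.pi_pos]
    · exact h1E h''

end Stmt8Aux

open Stmt8Aux

/-- The explicit function is `2π`-periodic and smooth in `θ`, and its image under `L` is a
nonzero multiple of `e`. -/
theorem stmt8 (K ω₀ r : ℝ) (hK : 0 < K) (hω₀ : 0 < ω₀) (hr : 0 < r)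
    (hfix : r = psiMu ω₀ (2 * K * r)) :
    (∀ ω ∈ ({-ω₀, ω₀} : Set ℝ),
        Function.Periodic (fun θ => p2 K r θ ω) (2 * Real.pi) ∧
          ContDiff ℝ (⊤ : ℕ∞) (fun θ => p2 K r θ ω)) ∧
      ∃ c : ℝ, c ≠ 0 ∧
        ∀ θ : ℝ, ∀ ω ∈ ({-ω₀, ω₀} : Set ℝ),
          Lop K ω₀ r (p2 K r) θ ω = c * eFun K r θ ω := by
  have hω₀ne : ω₀ ≠ 0 := hω₀.ne'
  have hmem : ∀ ω ∈ ({-ω₀, ω₀} : Set ℝ), ω ≠ 0 := by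
    intro ω hω
    rcases hω with h | h
    · rw [h]; exact neg_ne_zero.2 hω₀ne
    · rw [h]; exact hω₀ne
  constructor
  · intro ω hω
    exact ⟨p2_periodic K r (hmem ω hω), p2_contDiff K r ω⟩
  · refine ⟨K * (∫ v in (0:ℝ)..(2 * Real.pi), Real.sin v * p2 K r v ω₀),
      cst_ne K ω₀ r hK hω₀ hr, ?_⟩
    intro θ ω hω
    have hωne := hmem ω hω
    unfold Lop
    -- first derivative of p2
    have hd1 : deriv (fun u => p2 K r u ω)
        = fun t => 2 * ((ω - K * r * Real.sin t) * p2 K r t ω) + 1 := by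
      funext t
      rw [(p2_hasDerivAt K r ω t).deriv]
      ring
    -- derivative of (ω - Kr sin)·p2
    have hDp2 : ∀ t : ℝ, HasDerivAt (fun u => (ω - K * r * Real.sin u) * p2 K r u ω)
        (-(K * r * Real.cos t) * p2 K r t ω
          + (ω - K * r * Real.sin t) * (2 * (ω - K * r * Real.sin t) * p2 K r t ω + 1)) t := by
      intro t
      have h1 : HasDerivAt (fun u : ℝ => ω - K * r * Real.sin u) (-(K * r * Real.cos t)) t := by
        have h := ((Real.hasDerivAt_sin t).const_mul (K * r)).const_sub ω
        convert h using 1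
      exact h1.mul (p2_hasDerivAt K r ω t)
    have hd2 : deriv (deriv (fun u => p2 K r u ω)) θ
        = 2 * (-(K * r * Real.cos θ) * p2 K r θ ω
          + (ω - K * r * Real.sin θ) * (2 * (ω - K * r * Real.sin θ) * p2 K r θ ω + 1)) := by
      rw [hd1]
      exact (((hDp2 θ).const_mul 2).add_const 1).deriv
    -- rewrite the drift term
    have hfun2 : (fun u => p2 K r u ω * (Jconv K ω₀ (q K r) u + ω)
          + q K r u ω * Jconv K ω₀ (p2 K r) u)
        = fun u => (ω - K * r * Real.sin u) * p2 K r u ω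
          + (K * (∫ v in (0:ℝ)..(2 * Real.pi), Real.sin v * p2 K r v ω₀))
            * (q K r u ω * Real.cos u) := by
      funext u
      rw [Jconv_q K ω₀ r hω₀ne hfix u, Jconv_p2 K ω₀ r hω₀ne u]
      ring
    -- q is differentiable
    have hqd : DifferentiableAt ℝ (fun u => q K r u ω) θ := by
      have hrep : (fun u => q K r u ω)
          = fun u => ((1 - Ee ω) / Z ω (2 * K * r)) * p2 K r u ω := by
        funext u
        unfold q
        rw [S_eq K r hωne]
        ring
      rw [hrep]
      exact ((p2_hasDerivAt K r ω θ).differentiableAt).const_mul _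
    have hqc : HasDerivAt (fun u => q K r u ω * Real.cos u)
        (deriv (fun u => q K r u ω) θ * Real.cos θ + q K r θ ω * -Real.sin θ) θ :=
      (hqd.hasDerivAt).mul (Real.hasDerivAt_cos θ)
    have htot : HasDerivAt (fun u => (ω - K * r * Real.sin u) * p2 K r u ω
          + (K * (∫ v in (0:ℝ)..(2 * Real.pi), Real.sin v * p2 K r v ω₀))
            * (q K r u ω * Real.cos u))
        ((-(K * r * Real.cos θ) * p2 K r θ ω
            + (ω - K * r * Real.sin θ) * (2 * (ω - K * r * Real.sin θ) * p2 K r θ ω + 1))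
          + (K * (∫ v in (0:ℝ)..(2 * Real.pi), Real.sin v * p2 K r v ω₀))
            * (deriv (fun u => q K r u ω) θ * Real.cos θ + q K r θ ω * -Real.sin θ)) θ :=
      (hDp2 θ).add (hqc.const_mul _)
    rw [hfun2, hd2, htot.deriv]
    unfold eFun
    ring
end
end

section
/- Let h, l : ℝ × {−ω₀, ω₀} → ℝ be 2π-periodic and smooth in θ, odd (h(−θ, −ω) = −h(θ, ω) and likewise for l), with ∫₀^{2π} h(θ, ω) dθ = ∫₀^{2π} l(θ, ω) dθ = 0 for each ω. Then the Dirichlet form of L decomposes as ⟨Lh, l⟩_{μ,−1,q} = Γ(h, l) + K·ℓ(h)·ℓ(l), where Γ(h, l) = −(1/2)·(1/2)·Σ_{ω}∫₀^{2π} h(θ,ω)·l(θ,ω)/q(θ,ω) dθ + (1/2)·Σ_{ω}∫₀^{2π} κ(ω)·h(θ,ω)·𝓛(θ,ω)/q(θ,ω)² dθ, ℓ(a) = (1/2)·Σ_{ω}∫₀^{2π} a(θ, ω)·sin(θ) dθ, κ(ω) = (1 − exp(4πω))/(2·Z(ω, 2Kr)), and 𝓛(·, ω) is the 2π-periodic primitive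 of l(·, ω) normalized by ∫₀^{2π} 𝓛(θ, ω)/q(θ, ω) dθ = 0. -/
noncomputable section

open MeasureTheory

/-- The `2π`-periodic primitive of a zero-mean function `a`, normalized so that its
integral against `1/k` over a period vanishes. -/
def prim (k a : ℝ → ℝ) (θ : ℝ) : ℝ :=
  (∫ u in (0:ℝ)..θ, a u) -
    (∫ s in (0:ℝ)..(2 * Real.pi), (∫ u in (0:ℝ)..s, a u) / k s) /
      (∫ s in (0:ℝ)..(2 * Real.pi), 1 / k s)

/-- The weighted Sobolev pairing for zero-mean functions (binary disorder). -/
def pairMu (K r ω₀ : ℝ) (a b : ℝ → ℝ → ℝ) : ℝ :=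
  (1 / 2) *
    ((∫ θ in (0:ℝ)..(2 * Real.pi),
        prim (fun u => q K r u (-ω₀)) (fun u => a u (-ω₀)) θ *
          prim (fun u => q K r u (-ω₀)) (fun u => b u (-ω₀)) θ / q K r θ (-ω₀)) +
      (∫ θ in (0:ℝ)..(2 * Real.pi),
        prim (fun u => q K r u ω₀) (fun u => a u ω₀) θ *
          prim (fun u => q K r u ω₀) (fun u => b u ω₀) θ / q K r θ ω₀))

/-- The bilinear form appearing in the decomposition of the Dirichlet form. -/
def Gam (K r ω₀ : ℝ) (h l : ℝ → ℝ → ℝ) : ℝ :=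
  -(1 / 2) * ((1 / 2) *
      ((∫ θ in (0:ℝ)..(2 * Real.pi), h θ (-ω₀) * l θ (-ω₀) / q K r θ (-ω₀)) +
        (∫ θ in (0:ℝ)..(2 * Real.pi), h θ ω₀ * l θ ω₀ / q K r θ ω₀))) +
    (1 / 2) *
      ((∫ θ in (0:ℝ)..(2 * Real.pi),
          kap K r (-ω₀) * h θ (-ω₀) *
            prim (fun u => q K r u (-ω₀)) (fun u => l u (-ω₀)) θ / (q K r θ (-ω₀)) ^ 2) +
        (∫ θ in (0:ℝ)..(2 * Real.pi),
          kap K r ω₀ * h θ ω₀ *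
            prim (fun u => q K r u ω₀) (fun u => l u ω₀) θ / (q K r θ ω₀) ^ 2))

/-- The sine linear form. -/
def ellSin (ω₀ : ℝ) (a : ℝ → ℝ → ℝ) : ℝ :=
  (1 / 2) * ((∫ θ in (0:ℝ)..(2 * Real.pi), a θ (-ω₀) * Real.sin θ) +
    (∫ θ in (0:ℝ)..(2 * Real.pi), a θ ω₀ * Real.sin θ))
lemma contE (ω x : ℝ) : Continuous fun u : ℝ => Real.exp (-(G u ω x)) := by
  have : Continuous fun u : ℝ => -(G u ω x) := by unfold G; fun_prop
  exact Real.continuous_exp.comp this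

lemma intE (ω x a b : ℝ) :
    IntervalIntegrable (fun u : ℝ => Real.exp (-(G u ω x))) MeasureTheory.volume a b :=
  (contE ω x).intervalIntegrable a b

lemma hasDerivAt_P (ω x θ : ℝ) :
    HasDerivAt (fun t : ℝ => ∫ u in (0:ℝ)..t, Real.exp (-(G u ω x)))
      (Real.exp (-(G θ ω x))) θ :=
  ((contE ω x).integral_hasStrictDerivAt 0 θ).hasDerivAt

lemma hasDerivAt_G (ω x θ : ℝ) :
    HasDerivAt (fun t : ℝ => G t ω x) (-x * Real.sin θ + 2 * ω) θ := by
  unfold G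
  have h1 : HasDerivAt (fun t : ℝ => Real.cos t) (-Real.sin θ) θ := Real.hasDerivAt_cos θ
  have := ((h1.const_mul x).add ((hasDerivAt_id θ).const_mul (2*ω)))
  exact this.congr_deriv (by ring)

lemma hasDerivAt_S (ω x θ : ℝ) :
    HasDerivAt (fun t : ℝ => S t ω x)
      ((-x * Real.sin θ + 2 * ω) * S θ ω x + (1 - Real.exp (4 * Real.pi * ω))) θ := by
  have hG := hasDerivAt_G ω x θ
  have hexp : HasDerivAt (fun t : ℝ => Real.exp (G t ω x))
      (Real.exp (G θ ω x) * (-x * Real.sin θ + 2 * ω)) θ := by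
    have := (Real.hasDerivAt_exp (G θ ω x)).comp θ hG
    exact this.congr_deriv (by ring)
  have hbr : HasDerivAt (fun t : ℝ =>
      (1 - Real.exp (4 * Real.pi * ω)) * (∫ u in (0:ℝ)..t, Real.exp (-(G u ω x))) +
        Real.exp (4 * Real.pi * ω) * (∫ u in (0:ℝ)..(2 * Real.pi), Real.exp (-(G u ω x))))
      ((1 - Real.exp (4 * Real.pi * ω)) * Real.exp (-(G θ ω x))) θ := by
    exact ((hasDerivAt_P ω x θ).const_mul (1 - Real.exp (4 * Real.pi * ω))).add_const
      (Real.exp (4 * Real.pi * ω) * (∫ u in (0:ℝ)..(2 * Real.pi), Real.exp (-(G u ω x))))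
  have := hexp.mul hbr
  unfold S
  refine this.congr_deriv ?_
  have hexp1 : Real.exp (G θ ω x) * Real.exp (-(G θ ω x)) = 1 := by
    rw [← Real.exp_add]; simp
  linear_combination (1 - Real.exp (4 * Real.pi * ω)) * hexp1

lemma contS (ω x : ℝ) : Continuous fun θ : ℝ => S θ ω x := by
  rw [continuous_iff_continuousAt]
  exact fun θ => (hasDerivAt_S ω x θ).continuousAt
lemma G_add (ω x v : ℝ) : G (v + 2 * Real.pi) ω x = G v ω x + 4 * Real.pi * ω := by
  unfold G; rw [Real.cos_add_two_pi]; ring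

lemma G_sub (ω x v : ℝ) : G (v - 2 * Real.pi) ω x = G v ω x - 4 * Real.pi * ω := by
  unfold G; rw [Real.cos_sub_two_pi]; ring

lemma G_neg (ω x u : ℝ) : G (-u) (-ω) x = G u ω x := by
  unfold G; rw [Real.cos_neg]; ring

lemma G_negω (ω x u : ℝ) : G u (-ω) x = G (-u) ω x := by
  unfold G; rw [Real.cos_neg]; ring

lemma P_add (ω x θ : ℝ) :
    (∫ u in (0:ℝ)..(θ + 2 * Real.pi), Real.exp (-(G u ω x))) =
      (∫ u in (0:ℝ)..(2 * Real.pi), Real.exp (-(G u ω x))) +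
        Real.exp (-(4 * Real.pi * ω)) * ∫ u in (0:ℝ)..θ, Real.exp (-(G u ω x)) := by
  have h0 : (∫ u in (0:ℝ)..(2 * Real.pi), Real.exp (-(G u ω x))) +
      (∫ u in (2 * Real.pi)..(θ + 2 * Real.pi), Real.exp (-(G u ω x))) =
      ∫ u in (0:ℝ)..(θ + 2 * Real.pi), Real.exp (-(G u ω x)) :=
    intervalIntegral.integral_add_adjacent_intervals (intE ω x _ _) (intE ω x _ _)
  have h1 : (∫ v in (0:ℝ)..θ, Real.exp (-(G (v + 2 * Real.pi) ω x))) =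
      ∫ u in (2 * Real.pi)..(θ + 2 * Real.pi), Real.exp (-(G u ω x)) := by
    have := intervalIntegral.integral_comp_add_right
      (a := (0:ℝ)) (b := θ) (fun u => Real.exp (-(G u ω x))) (2 * Real.pi)
    simpa using this
  have h2 : (∫ v in (0:ℝ)..θ, Real.exp (-(G (v + 2 * Real.pi) ω x))) =
      Real.exp (-(4 * Real.pi * ω)) * ∫ u in (0:ℝ)..θ, Real.exp (-(G u ω x)) := by
    rw [← intervalIntegral.integral_const_mul]
    apply intervalIntegral.integral_congr
    intro u _
    simp only [G_add]
    rw [← Real.exp_add]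
    ring_nf
  rw [← h0, ← h1, h2]

lemma S_per (ω x θ : ℝ) : S (θ + 2 * Real.pi) ω x = S θ ω x := by
  unfold S
  rw [P_add, G_add, Real.exp_add, Real.exp_neg]
  have hB := Real.exp_ne_zero (4 * Real.pi * ω)
  field_simp
  ring

lemma S_periodic (ω x : ℝ) : Function.Periodic (fun θ => S θ ω x) (2 * Real.pi) :=
  fun θ => S_per ω x θ

lemma S_pos (ω x : ℝ) {θ : ℝ} (hθ : θ ∈ Set.Icc 0 (2 * Real.pi)) : 0 < S θ ω x := by
  have hD : (∫ u in (0:ℝ)..(2 * Real.pi), Real.exp (-(G u ω x))) =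
      (∫ u in (0:ℝ)..θ, Real.exp (-(G u ω x))) +
        ∫ u in θ..(2 * Real.pi), Real.exp (-(G u ω x)) :=
    (intervalIntegral.integral_add_adjacent_intervals (intE ω x _ _) (intE ω x _ _)).symm
  have hP : 0 ≤ ∫ u in (0:ℝ)..θ, Real.exp (-(G u ω x)) :=
    intervalIntegral.integral_nonneg hθ.1 (fun u _ => (Real.exp_pos _).le)
  have hR : 0 ≤ ∫ u in θ..(2 * Real.pi), Real.exp (-(G u ω x)) :=
    intervalIntegral.integral_nonneg hθ.2 (fun u _ => (Real.exp_pos _).le)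
  have hkey : 0 < (∫ u in (0:ℝ)..θ, Real.exp (-(G u ω x))) +
      Real.exp (4 * Real.pi * ω) * ∫ u in θ..(2 * Real.pi), Real.exp (-(G u ω x)) := by
    rcases lt_or_eq_of_le hθ.2 with hlt | heq
    · have : 0 < ∫ u in θ..(2 * Real.pi), Real.exp (-(G u ω x)) :=
        intervalIntegral.intervalIntegral_pos_of_pos (intE ω x _ _)
          (fun u => Real.exp_pos _) hlt
      positivity
    · subst heq
      have : 0 < ∫ u in (0:ℝ)..(2 * Real.pi), Real.exp (-(G u ω x)) :=
        intervalIntegral.intervalIntegral_pos_of_pos (intE ω x _ _)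
          (fun u => Real.exp_pos _) (by positivity)
      positivity
  unfold S
  have : (1 - Real.exp (4 * Real.pi * ω)) * (∫ u in (0:ℝ)..θ, Real.exp (-(G u ω x))) +
      Real.exp (4 * Real.pi * ω) * (∫ u in (0:ℝ)..(2 * Real.pi), Real.exp (-(G u ω x))) =
      (∫ u in (0:ℝ)..θ, Real.exp (-(G u ω x))) +
        Real.exp (4 * Real.pi * ω) * ∫ u in θ..(2 * Real.pi), Real.exp (-(G u ω x)) := by
    rw [hD]; ring
  rw [this]
  positivity

lemma Z_pos (ω x : ℝ) : 0 < Z ω x := by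
  unfold Z
  exact intervalIntegral.intervalIntegral_pos_of_pos_on
    ((contS ω x).intervalIntegrable _ _)
    (fun θ hθ => S_pos ω x ⟨hθ.1.le, hθ.2.le⟩) (by positivity)

lemma P_negω (ω x θ : ℝ) :
    (∫ u in (0:ℝ)..θ, Real.exp (-(G u (-ω) x))) =
      -∫ u in (0:ℝ)..(-θ), Real.exp (-(G u ω x)) := by
  have h1 : (∫ u in (0:ℝ)..θ, Real.exp (-(G u (-ω) x))) =
      ∫ u in (0:ℝ)..θ, (fun v => Real.exp (-(G v ω x))) (-u) := by
    apply intervalIntegral.integral_congr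
    intro u _
    simp only [G_negω]
  have h0 := intervalIntegral.integral_comp_neg (a := (0:ℝ)) (b := θ)
    (fun v => Real.exp (-(G v ω x)))
  rw [h1, h0, neg_zero]
  exact intervalIntegral.integral_symm 0 (-θ)

lemma D_negω (ω x : ℝ) :
    (∫ u in (0:ℝ)..(2 * Real.pi), Real.exp (-(G u (-ω) x))) =
      Real.exp (4 * Real.pi * ω) * ∫ u in (0:ℝ)..(2 * Real.pi), Real.exp (-(G u ω x)) := by
  rw [P_negω]
  have h2 : (∫ v in (0:ℝ)..(2 * Real.pi), Real.exp (-(G (v - 2 * Real.pi) ω x))) =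
      ∫ u in (-(2 * Real.pi))..(0:ℝ), Real.exp (-(G u ω x)) := by
    have := intervalIntegral.integral_comp_sub_right
      (a := (0:ℝ)) (b := 2 * Real.pi) (fun u => Real.exp (-(G u ω x))) (2 * Real.pi)
    simpa using this
  have h3 : (∫ v in (0:ℝ)..(2 * Real.pi), Real.exp (-(G (v - 2 * Real.pi) ω x))) =
      Real.exp (4 * Real.pi * ω) * ∫ u in (0:ℝ)..(2 * Real.pi), Real.exp (-(G u ω x)) := by
    rw [← intervalIntegral.integral_const_mul]
    apply intervalIntegral.integral_congr
    intro u _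
    simp only [G_sub]
    rw [← Real.exp_add]
    ring_nf
  rw [intervalIntegral.integral_symm, ← h2, h3]
  ring

lemma S_neg (ω x θ : ℝ) : S (-θ) (-ω) x = Real.exp (-(4 * Real.pi * ω)) * S θ ω x := by
  unfold S
  have e1 : 4 * Real.pi * -ω = -(4 * Real.pi * ω) := by ring
  have e2 : (∫ u in (0:ℝ)..(-θ), Real.exp (-(G u (-ω) x))) =
      -∫ u in (0:ℝ)..θ, Real.exp (-(G u ω x)) := by
    rw [P_negω]; rw [neg_neg]
  rw [e1, G_neg, e2, D_negω, Real.exp_neg]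
  have hB := Real.exp_ne_zero (4 * Real.pi * ω)
  field_simp
  ring
lemma per_shift (f : ℝ → ℝ) (hf : Function.Periodic f (2 * Real.pi)) :
    (∫ u in (-(2 * Real.pi))..(0:ℝ), f u) = ∫ u in (0:ℝ)..(2 * Real.pi), f u := by
  have := hf.intervalIntegral_add_eq (-(2 * Real.pi)) 0
  simpa using this

lemma Z_negω (ω x : ℝ) : Z (-ω) x = Real.exp (-(4 * Real.pi * ω)) * Z ω x := by
  unfold Z
  have h1 : (∫ u in (0:ℝ)..(2 * Real.pi), S u (-ω) x) =
      ∫ u in (0:ℝ)..(2 * Real.pi), Real.exp (-(4 * Real.pi * ω)) * ((fun v => S v ω x) (-u)) := by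
    apply intervalIntegral.integral_congr
    intro u _
    have := S_neg ω x (-u); rw [neg_neg] at this
    simpa using this
  have h0 := intervalIntegral.integral_comp_neg (a := (0:ℝ)) (b := 2 * Real.pi)
    (fun v => S v ω x)
  rw [h1, intervalIntegral.integral_const_mul, h0, neg_zero,
    per_shift _ (S_periodic ω x)]

lemma sinS_negω (ω x : ℝ) :
    (∫ u in (0:ℝ)..(2 * Real.pi), Real.sin u * S u (-ω) x) =
      -(Real.exp (-(4 * Real.pi * ω)) * ∫ u in (0:ℝ)..(2 * Real.pi), Real.sin u * S u ω x) := by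
  have h1 : (∫ u in (0:ℝ)..(2 * Real.pi), Real.sin u * S u (-ω) x) =
      ∫ u in (0:ℝ)..(2 * Real.pi),
        (-(Real.exp (-(4 * Real.pi * ω)))) * ((fun v => Real.sin v * S v ω x) (-u)) := by
    apply intervalIntegral.integral_congr
    intro u _
    have hs := S_neg ω x (-u); rw [neg_neg] at hs
    simp only [hs, Real.sin_neg]
    ring
  have h0 := intervalIntegral.integral_comp_neg (a := (0:ℝ)) (b := 2 * Real.pi)
    (fun v => Real.sin v * S v ω x)
  have hper : Function.Periodic (fun v => Real.sin v * S v ω x) (2 * Real.pi) :=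
    Real.sin_periodic.mul (S_periodic ω x)
  rw [h1, intervalIntegral.integral_const_mul, h0, neg_zero, per_shift _ hper]
  ring

lemma q_per (K r ω θ : ℝ) : q K r (θ + 2 * Real.pi) ω = q K r θ ω := by
  unfold q; rw [S_per]

lemma q_periodic (K r ω : ℝ) : Function.Periodic (fun θ => q K r θ ω) (2 * Real.pi) :=
  fun θ => q_per K r ω θ

lemma q_cont (K r ω : ℝ) : Continuous fun θ => q K r θ ω := by
  unfold q; exact (contS ω _).div_const _

lemma q_pos (K r ω : ℝ) {θ : ℝ} (hθ : θ ∈ Set.Icc 0 (2 * Real.pi)) : 0 < q K r θ ω :=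
  div_pos (S_pos ω _ hθ) (Z_pos ω _)

lemma q_ne (K r ω : ℝ) : ∀ θ ∈ Set.uIcc (0:ℝ) (2 * Real.pi), q K r θ ω ≠ 0 := by
  intro θ hθ
  rw [Set.uIcc_of_le (by positivity)] at hθ
  exact (q_pos K r ω hθ).ne'

lemma hasDerivAt_q (K r ω θ : ℝ) :
    HasDerivAt (fun t => q K r t ω)
      ((-(2 * K * r) * Real.sin θ + 2 * ω) * q K r θ ω + 2 * kap K r ω) θ := by
  have := (hasDerivAt_S ω (2 * K * r) θ).div_const (Z ω (2 * K * r))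
  unfold q kap
  refine this.congr_deriv ?_
  have hZ := (Z_pos ω (2 * K * r)).ne'
  field_simp

lemma cosq_sum (K ω₀ r : ℝ) (hfix : r = psiMu ω₀ (2 * K * r)) :
    (∫ u in (0:ℝ)..(2 * Real.pi), Real.cos u * q K r u (-ω₀)) +
      (∫ u in (0:ℝ)..(2 * Real.pi), Real.cos u * q K r u ω₀) = 2 * r := by
  have h : ∀ ω : ℝ, (∫ u in (0:ℝ)..(2 * Real.pi), Real.cos u * q K r u ω) =
      (∫ u in (0:ℝ)..(2 * Real.pi), Real.cos u * S u ω (2 * K * r)) / Z ω (2 * K * r) := by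
    intro ω
    rw [← intervalIntegral.integral_div]
    apply intervalIntegral.integral_congr
    intro u _
    unfold q
    ring
  rw [h, h]
  rw [psiMu] at hfix
  linarith

lemma sinq_sum (K r ω₀ : ℝ) :
    (∫ u in (0:ℝ)..(2 * Real.pi), Real.sin u * q K r u (-ω₀)) +
      (∫ u in (0:ℝ)..(2 * Real.pi), Real.sin u * q K r u ω₀) = 0 := by
  have h : ∀ ω : ℝ, (∫ u in (0:ℝ)..(2 * Real.pi), Real.sin u * q K r u ω) =
      (∫ u in (0:ℝ)..(2 * Real.pi), Real.sin u * S u ω (2 * K * r)) / Z ω (2 * K * r) := by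
    intro ω
    rw [← intervalIntegral.integral_div]
    apply intervalIntegral.integral_congr
    intro u _
    unfold q
    ring
  rw [h, h, sinS_negω ω₀ (2 * K * r), Z_negω ω₀ (2 * K * r)]
  have hZ := (Z_pos ω₀ (2 * K * r)).ne'
  have hE := Real.exp_ne_zero (-(4 * Real.pi * ω₀))
  field_simp
  ring
lemma conv_expand (g : ℝ → ℝ) (hc : Continuous g)
    (hp : Function.Periodic g (2 * Real.pi)) (θ : ℝ) :
    (∫ φ in (0:ℝ)..(2 * Real.pi), Real.sin φ * g (θ - φ)) =
      Real.sin θ * (∫ u in (0:ℝ)..(2 * Real.pi), Real.cos u * g u) -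
        Real.cos θ * ∫ u in (0:ℝ)..(2 * Real.pi), Real.sin u * g u := by
  set k : ℝ → ℝ := fun u => Real.sin (θ - u) * g u with hk
  have hkc : Continuous k := by
    apply Continuous.mul _ hc
    exact Real.continuous_sin.comp (continuous_const.sub continuous_id)
  have hkp : Function.Periodic k (2 * Real.pi) := by
    intro u
    simp only [hk]
    rw [show θ - (u + 2 * Real.pi) = (θ - u) - 2 * Real.pi by ring,
      Real.sin_sub_two_pi, hp u]
  have h1 : (∫ φ in (0:ℝ)..(2 * Real.pi), Real.sin φ * g (θ - φ)) =
      ∫ φ in (0:ℝ)..(2 * Real.pi), k (θ - φ) := by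
    apply intervalIntegral.integral_congr
    intro φ _
    simp only [hk]
    rw [show θ - (θ - φ) = φ by ring]
  have h2 := intervalIntegral.integral_comp_sub_left (a := (0:ℝ)) (b := 2 * Real.pi) k θ
  have h3 : (∫ u in (θ - 2 * Real.pi)..(θ - 0), k u) = ∫ u in (0:ℝ)..(2 * Real.pi), k u := by
    have := hkp.intervalIntegral_add_eq (θ - 2 * Real.pi) 0
    rw [show θ - 2 * Real.pi + 2 * Real.pi = θ - 0 by ring, zero_add] at this
    exact this
  have h4 : (∫ u in (0:ℝ)..(2 * Real.pi), k u) =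
      ∫ u in (0:ℝ)..(2 * Real.pi),
        (Real.sin θ * (Real.cos u * g u) - Real.cos θ * (Real.sin u * g u)) := by
    apply intervalIntegral.integral_congr
    intro u _
    simp only [hk]
    rw [Real.sin_sub]
    ring
  rw [h1, h2, h3, h4, intervalIntegral.integral_sub, intervalIntegral.integral_const_mul,
    intervalIntegral.integral_const_mul]
  · exact ((Real.continuous_cos.mul hc).intervalIntegrable _ _).const_mul _
  · exact ((Real.continuous_sin.mul hc).intervalIntegrable _ _).const_mul _

lemma Jq_eq (K ω₀ r : ℝ) (hfix : r = psiMu ω₀ (2 * K * r)) (θ : ℝ) :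
    Jconv K ω₀ (q K r) θ = -(K * r) * Real.sin θ := by
  unfold Jconv
  rw [conv_expand (fun u => q K r u (-ω₀)) (q_cont K r (-ω₀)) (q_periodic K r (-ω₀)) θ,
    conv_expand (fun u => q K r u ω₀) (q_cont K r ω₀) (q_periodic K r ω₀) θ]
  have h1 := cosq_sum K ω₀ r hfix
  have h2 := sinq_sum K r ω₀
  linear_combination (-(K / 2) * Real.sin θ) * h1 + (K / 2 * Real.cos θ) * h2

lemma Jh_eq (K ω₀ : ℝ) (h : ℝ → ℝ → ℝ)
    (hcm : Continuous fun θ => h θ (-ω₀)) (hcp : Continuous fun θ => h θ ω₀)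
    (hpm : Function.Periodic (fun θ => h θ (-ω₀)) (2 * Real.pi))
    (hpp : Function.Periodic (fun θ => h θ ω₀) (2 * Real.pi))
    (hA : (∫ u in (0:ℝ)..(2 * Real.pi), Real.cos u * h u (-ω₀)) +
        (∫ u in (0:ℝ)..(2 * Real.pi), Real.cos u * h u ω₀) = 0)
    (θ : ℝ) :
    Jconv K ω₀ h θ = K * ellSin ω₀ h * Real.cos θ := by
  unfold Jconv
  rw [conv_expand (fun u => h u (-ω₀)) hcm hpm θ, conv_expand (fun u => h u ω₀) hcp hpp θ]
  unfold ellSin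
  have c1 : (∫ u in (0:ℝ)..(2 * Real.pi), Real.sin u * h u (-ω₀)) =
      ∫ u in (0:ℝ)..(2 * Real.pi), h u (-ω₀) * Real.sin u :=
    intervalIntegral.integral_congr (fun u _ => mul_comm _ _)
  have c2 : (∫ u in (0:ℝ)..(2 * Real.pi), Real.sin u * h u ω₀) =
      ∫ u in (0:ℝ)..(2 * Real.pi), h u ω₀ * Real.sin u :=
    intervalIntegral.integral_congr (fun u _ => mul_comm _ _)
  rw [c1, c2]
  linear_combination (-(K / 2) * Real.sin θ) * hA

lemma cosh_sum (ω₀ : ℝ) (h : ℝ → ℝ → ℝ)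
    (hpp : Function.Periodic (fun θ => h θ ω₀) (2 * Real.pi))
    (hodd : ∀ θ : ℝ, h (-θ) (-ω₀) = -h θ ω₀) :
    (∫ u in (0:ℝ)..(2 * Real.pi), Real.cos u * h u (-ω₀)) +
      (∫ u in (0:ℝ)..(2 * Real.pi), Real.cos u * h u ω₀) = 0 := by
  have key : ∀ u : ℝ, h u (-ω₀) = -h (-u) ω₀ := by
    intro u
    have := hodd (-u)
    rwa [neg_neg] at this
  have h1 : (∫ u in (0:ℝ)..(2 * Real.pi), Real.cos u * h u (-ω₀)) =
      ∫ u in (0:ℝ)..(2 * Real.pi), (-1 : ℝ) * ((fun v => Real.cos v * h v ω₀) (-u)) := by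
    apply intervalIntegral.integral_congr
    intro u _
    simp only [key u, Real.cos_neg]
    ring
  have h0 := intervalIntegral.integral_comp_neg (a := (0:ℝ)) (b := 2 * Real.pi)
    (fun v => Real.cos v * h v ω₀)
  have hper : Function.Periodic (fun v => Real.cos v * h v ω₀) (2 * Real.pi) :=
    Real.cos_periodic.mul hpp
  rw [h1, intervalIntegral.integral_const_mul, h0, neg_zero, per_shift _ hper]
  ring
lemma cont_primitive (a : ℝ → ℝ) (hc : Continuous a) :
    Continuous fun θ : ℝ => ∫ u in (0:ℝ)..θ, a u := by
  rw [continuous_iff_continuousAt]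
  exact fun θ => ((hc.integral_hasStrictDerivAt 0 θ).hasDerivAt).continuousAt

lemma prim_hasDerivAt (k a : ℝ → ℝ) (hc : Continuous a) (θ : ℝ) :
    HasDerivAt (prim k a) (a θ) θ := by
  have := ((hc.integral_hasStrictDerivAt 0 θ).hasDerivAt).sub_const
    ((∫ s in (0:ℝ)..(2 * Real.pi), (∫ u in (0:ℝ)..s, a u) / k s) /
      (∫ s in (0:ℝ)..(2 * Real.pi), 1 / k s))
  exact this

lemma prim_cont (k a : ℝ → ℝ) (hc : Continuous a) : Continuous (prim k a) := by
  rw [continuous_iff_continuousAt]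
  exact fun θ => (prim_hasDerivAt k a hc θ).continuousAt

lemma int_one_div_q_pos (K r ω : ℝ) :
    0 < ∫ θ in (0:ℝ)..(2 * Real.pi), 1 / q K r θ ω := by
  have hco : ContinuousOn (fun θ => 1 / q K r θ ω) (Set.uIcc 0 (2 * Real.pi)) :=
    ContinuousOn.div continuousOn_const (q_cont K r ω).continuousOn (q_ne K r ω)
  apply intervalIntegral.intervalIntegral_pos_of_pos_on
    (hco.intervalIntegrable)
  · intro x hx
    have : 0 < q K r x ω := q_pos K r ω ⟨hx.1.le, hx.2.le⟩
    positivity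
  · positivity

lemma prim_int_zero (K r ω : ℝ) (a : ℝ → ℝ) (hc : Continuous a) :
    (∫ θ in (0:ℝ)..(2 * Real.pi), prim (fun u => q K r u ω) a θ / q K r θ ω) = 0 := by
  have hA : Continuous fun θ : ℝ => ∫ u in (0:ℝ)..θ, a u := cont_primitive a hc
  have hAq : ContinuousOn (fun θ => (∫ u in (0:ℝ)..θ, a u) / q K r θ ω)
      (Set.uIcc 0 (2 * Real.pi)) :=
    ContinuousOn.div hA.continuousOn (q_cont K r ω).continuousOn (q_ne K r ω)
  have h1q : ContinuousOn (fun θ => 1 / q K r θ ω) (Set.uIcc 0 (2 * Real.pi)) :=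
    ContinuousOn.div continuousOn_const (q_cont K r ω).continuousOn (q_ne K r ω)
  have hne : (∫ θ in (0:ℝ)..(2 * Real.pi), 1 / q K r θ ω) ≠ 0 :=
    (int_one_div_q_pos K r ω).ne'
  set c := (∫ s in (0:ℝ)..(2 * Real.pi), (∫ u in (0:ℝ)..s, a u) / q K r s ω) /
      (∫ s in (0:ℝ)..(2 * Real.pi), 1 / q K r s ω) with hcdef
  have hsplit : (∫ θ in (0:ℝ)..(2 * Real.pi), prim (fun u => q K r u ω) a θ / q K r θ ω) =
      (∫ θ in (0:ℝ)..(2 * Real.pi), (∫ u in (0:ℝ)..θ, a u) / q K r θ ω) -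
        ∫ θ in (0:ℝ)..(2 * Real.pi), c * (1 / q K r θ ω) := by
    rw [← intervalIntegral.integral_sub (hAq.intervalIntegrable)
      (h1q.intervalIntegrable.const_mul c)]
    apply intervalIntegral.integral_congr
    intro θ _
    unfold prim
    rw [← hcdef]
    ring
  rw [hsplit, intervalIntegral.integral_const_mul, hcdef, div_mul_cancel₀ _ hne, sub_self]

lemma ibp_per (u v u' v' : ℝ → ℝ)
    (hu : ∀ x ∈ Set.uIcc (0:ℝ) (2 * Real.pi), HasDerivAt u (u' x) x)
    (hv : ∀ x ∈ Set.uIcc (0:ℝ) (2 * Real.pi), HasDerivAt v (v' x) x)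
    (hu' : IntervalIntegrable u' MeasureTheory.volume 0 (2 * Real.pi))
    (hv' : IntervalIntegrable v' MeasureTheory.volume 0 (2 * Real.pi))
    (hbd : u (2 * Real.pi) * v (2 * Real.pi) = u 0 * v 0) :
    (∫ x in (0:ℝ)..(2 * Real.pi), u x * v' x) =
      -∫ x in (0:ℝ)..(2 * Real.pi), u' x * v x := by
  rw [intervalIntegral.integral_mul_deriv_eq_deriv_mul hu hv hu' hv', hbd]
  ring
/-- Derivative of `q` (as an expression). -/
def Dq (K r ω θ : ℝ) : ℝ :=
  (-(2 * K * r) * Real.sin θ + 2 * ω) * q K r θ ω + 2 * kap K r ω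

/-- Derivative of the drift part of `L h`. -/
def Ee (K ω₀ r ω : ℝ) (h : ℝ → ℝ → ℝ) (θ : ℝ) : ℝ :=
  (deriv (fun u => h u ω) θ * (ω - K * r * Real.sin θ) +
      h θ ω * (-(K * r) * Real.cos θ)) +
    (Dq K r ω θ * (K * ellSin ω₀ h * Real.cos θ) +
      q K r θ ω * (K * ellSin ω₀ h * (-Real.sin θ)))

/-- Antiderivative of `L h` (up to a constant). -/
def Ff (K ω₀ r ω : ℝ) (h : ℝ → ℝ → ℝ) (θ : ℝ) : ℝ :=
  (1 / 2) * deriv (fun u => h u ω) θ -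
    (h θ ω * (ω - K * r * Real.sin θ) + q K r θ ω * (K * ellSin ω₀ h * Real.cos θ))

lemma hasDerivAt_g2 (K ω₀ r ω : ℝ) (h : ℝ → ℝ → ℝ)
    (hd1 : Differentiable ℝ fun θ => h θ ω) (θ : ℝ) :
    HasDerivAt (fun u => h u ω * (ω - K * r * Real.sin u) +
      q K r u ω * (K * ellSin ω₀ h * Real.cos u)) (Ee K ω₀ r ω h θ) θ := by
  have h1 : HasDerivAt (fun u => ω - K * r * Real.sin u) (-(K * r) * Real.cos θ) θ := by
    have := ((Real.hasDerivAt_sin θ).const_mul (K * r)).const_sub ω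
    exact this.congr_deriv (by ring)
  have h2 := ((hd1 θ).hasDerivAt).mul h1
  have h3 : HasDerivAt (fun u => K * ellSin ω₀ h * Real.cos u)
      (K * ellSin ω₀ h * (-Real.sin θ)) θ :=
    (Real.hasDerivAt_cos θ).const_mul _
  have h4 := (hasDerivAt_q K r ω θ).mul h3
  have := h2.add h4
  refine this.congr_deriv ?_
  all_goals (unfold Ee Dq; ring)

lemma hasDerivAt_F (K ω₀ r ω : ℝ) (h : ℝ → ℝ → ℝ)
    (hd1 : Differentiable ℝ fun θ => h θ ω)
    (hd2' : Differentiable ℝ (deriv fun θ => h θ ω)) (θ : ℝ) :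
    HasDerivAt (Ff K ω₀ r ω h)
      ((1 / 2) * deriv (deriv fun u => h u ω) θ - Ee K ω₀ r ω h θ) θ := by
  have h1 := ((hd2' θ).hasDerivAt).const_mul (1 / 2 : ℝ)
  exact h1.sub (hasDerivAt_g2 K ω₀ r ω h hd1 θ)

lemma Lop_eq (K ω₀ r ω : ℝ) (hfix : r = psiMu ω₀ (2 * K * r)) (h : ℝ → ℝ → ℝ)
    (hd1 : Differentiable ℝ fun θ => h θ ω)
    (hJh : ∀ u : ℝ, Jconv K ω₀ h u = K * ellSin ω₀ h * Real.cos u) (θ : ℝ) :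
    Lop K ω₀ r h θ ω =
      (1 / 2) * deriv (deriv fun u => h u ω) θ - Ee K ω₀ r ω h θ := by
  unfold Lop
  have hfun : (fun u => h u ω * (Jconv K ω₀ (q K r) u + ω) + q K r u ω * Jconv K ω₀ h u) =
      fun u => h u ω * (ω - K * r * Real.sin u) +
        q K r u ω * (K * ellSin ω₀ h * Real.cos u) := by
    funext u
    rw [Jq_eq K ω₀ r hfix u, hJh u]
    ring
  rw [hfun, (hasDerivAt_g2 K ω₀ r ω h hd1 θ).deriv]
lemma main_per_omega (K ω₀ r ω : ℝ) (hfix : r = psiMu ω₀ (2 * K * r))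
    (h l : ℝ → ℝ → ℝ)
    (hsm : ContDiff ℝ (⊤ : ℕ∞) fun θ => h θ ω)
    (hper : Function.Periodic (fun θ => h θ ω) (2 * Real.pi))
    (lc : Continuous fun θ => l θ ω)
    (lmean : (∫ θ in (0:ℝ)..(2 * Real.pi), l θ ω) = 0)
    (hJh : ∀ u : ℝ, Jconv K ω₀ h u = K * ellSin ω₀ h * Real.cos u) :
    (∫ θ in (0:ℝ)..(2 * Real.pi),
        prim (fun u => q K r u ω) (fun u => Lop K ω₀ r h u ω) θ *
          prim (fun u => q K r u ω) (fun u => l u ω) θ / q K r θ ω) =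
      -(1 / 2) * (∫ θ in (0:ℝ)..(2 * Real.pi), h θ ω * l θ ω / q K r θ ω) +
        (∫ θ in (0:ℝ)..(2 * Real.pi),
          kap K r ω * h θ ω * prim (fun u => q K r u ω) (fun u => l u ω) θ /
            q K r θ ω ^ 2) +
        K * ellSin ω₀ h * ∫ θ in (0:ℝ)..(2 * Real.pi), l θ ω * Real.sin θ := by
  -- basic regularity facts
  have hd1 : Differentiable ℝ fun θ => h θ ω := hsm.differentiable (by simp)
  have hd2 : ContDiff ℝ (⊤ : ℕ∞) (deriv fun θ => h θ ω) :=
    (contDiff_infty_iff_deriv.mp hsm).2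
  have hd2' : Differentiable ℝ (deriv fun θ => h θ ω) := hd2.differentiable (by simp)
  have cont_h : Continuous fun θ => h θ ω := hd1.continuous
  have cont_dh : Continuous (deriv fun θ => h θ ω) := hd2'.continuous
  have cont_d2h : Continuous (deriv (deriv fun θ => h θ ω)) :=
    ((contDiff_infty_iff_deriv.mp hd2).2).differentiable (by simp) |>.continuous
  have hqc : Continuous fun θ => q K r θ ω := q_cont K r ω
  have contDq : Continuous fun θ => Dq K r ω θ := by
    unfold Dq
    exact (((continuous_const.mul Real.continuous_sin).add continuous_const).mul hqc).add
      continuous_const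
  have contEe : Continuous fun θ => Ee K ω₀ r ω h θ := by
    unfold Ee
    apply Continuous.add
    · exact (cont_dh.mul (by fun_prop)).add (cont_h.mul (by fun_prop))
    · exact (contDq.mul (by fun_prop)).add (hqc.mul (by fun_prop))
  -- the antiderivative of Lop
  have hLop : ∀ θ : ℝ, Lop K ω₀ r h θ ω =
      (1 / 2) * deriv (deriv fun u => h u ω) θ - Ee K ω₀ r ω h θ :=
    Lop_eq K ω₀ r ω hfix h hd1 hJh
  have hFd : ∀ u : ℝ, HasDerivAt (Ff K ω₀ r ω h) (Lop K ω₀ r h u ω) u := by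
    intro u
    rw [hLop u]
    exact hasDerivAt_F K ω₀ r ω h hd1 hd2' u
  have acont : Continuous fun θ => Lop K ω₀ r h θ ω := by
    have : (fun θ => Lop K ω₀ r h θ ω) =
        fun θ => (1 / 2) * deriv (deriv fun u => h u ω) θ - Ee K ω₀ r ω h θ :=
      funext hLop
    rw [this]
    exact (continuous_const.mul cont_d2h).sub contEe
  have hFT : ∀ θ : ℝ, (∫ u in (0:ℝ)..θ, Lop K ω₀ r h u ω) =
      Ff K ω₀ r ω h θ - Ff K ω₀ r ω h 0 := fun θ =>
    intervalIntegral.integral_eq_sub_of_hasDerivAt (fun u _ => hFd u)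
      (acont.intervalIntegrable _ _)
  obtain ⟨CC, hprim⟩ : ∃ c : ℝ, ∀ θ : ℝ,
      prim (fun u => q K r u ω) (fun u => Lop K ω₀ r h u ω) θ = Ff K ω₀ r ω h θ - c := by
    refine ⟨Ff K ω₀ r ω h 0 +
      (∫ s in (0:ℝ)..(2 * Real.pi), (∫ u in (0:ℝ)..s, Lop K ω₀ r h u ω) / q K r s ω) /
        (∫ s in (0:ℝ)..(2 * Real.pi), 1 / q K r s ω), fun θ => ?_⟩
    unfold prim
    rw [hFT θ]
    ring
  -- facts about the primitive of l
  have hLd : ∀ θ : ℝ, HasDerivAt (prim (fun u => q K r u ω) (fun u => l u ω)) (l θ ω) θ :=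
    prim_hasDerivAt _ _ lc
  have Lcont : Continuous (prim (fun u => q K r u ω) (fun u => l u ω)) :=
    prim_cont _ _ lc
  have Lbd : prim (fun u => q K r u ω) (fun u => l u ω) (2 * Real.pi) =
      prim (fun u => q K r u ω) (fun u => l u ω) 0 := by
    unfold prim
    rw [lmean, intervalIntegral.integral_same]
  -- boundary values
  have e1 : h (2 * Real.pi) ω = h 0 ω := by
    have := hper 0
    simpa using this
  have e2 : q K r (2 * Real.pi) ω = q K r 0 ω := by
    have := q_per K r ω 0
    simpa using this
  -- pointwise splitting of the integrand
  have hsplit : (∫ θ in (0:ℝ)..(2 * Real.pi),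
      prim (fun u => q K r u ω) (fun u => Lop K ω₀ r h u ω) θ *
        prim (fun u => q K r u ω) (fun u => l u ω) θ / q K r θ ω) =
      ∫ θ in (0:ℝ)..(2 * Real.pi),
        ((1 / 2) * (prim (fun u => q K r u ω) (fun u => l u ω) θ *
            ((deriv (fun u => h u ω) θ * q K r θ ω - h θ ω * Dq K r ω θ) / q K r θ ω ^ 2)) +
          kap K r ω * h θ ω * prim (fun u => q K r u ω) (fun u => l u ω) θ / q K r θ ω ^ 2 +
          (-(K * ellSin ω₀ h)) * (prim (fun u => q K r u ω) (fun u => l u ω) θ * Real.cos θ) +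
          (-CC) * (prim (fun u => q K r u ω) (fun u => l u ω) θ / q K r θ ω)) := by
    apply intervalIntegral.integral_congr
    intro θ hθ
    have hq := q_ne K r ω θ hθ
    dsimp only
    rw [hprim θ]
    unfold Ff Dq
    field_simp
    ring
  rw [hsplit]
  -- integrability of the pieces
  have huIcc : Set.uIcc (0:ℝ) (2 * Real.pi) = Set.Icc 0 (2 * Real.pi) :=
    Set.uIcc_of_le (by positivity)
  have hq2ne : ∀ θ ∈ Set.uIcc (0:ℝ) (2 * Real.pi), q K r θ ω ^ 2 ≠ 0 :=
    fun θ hθ => pow_ne_zero 2 (q_ne K r ω θ hθ)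
  have int1 : IntervalIntegrable (fun θ =>
      (1 / 2) * (prim (fun u => q K r u ω) (fun u => l u ω) θ *
        ((deriv (fun u => h u ω) θ * q K r θ ω - h θ ω * Dq K r ω θ) / q K r θ ω ^ 2)))
      MeasureTheory.volume 0 (2 * Real.pi) := by
    apply ContinuousOn.intervalIntegrable
    exact ContinuousOn.mul continuousOn_const
      (Lcont.continuousOn.mul
        ((((cont_dh.mul hqc).sub (cont_h.mul contDq)).continuousOn).div
          ((hqc.pow 2).continuousOn) hq2ne))
  have int2 : IntervalIntegrable (fun θ =>
      kap K r ω * h θ ω * prim (fun u => q K r u ω) (fun u => l u ω) θ / q K r θ ω ^ 2)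
      MeasureTheory.volume 0 (2 * Real.pi) := by
    apply ContinuousOn.intervalIntegrable
    exact (((continuous_const.mul cont_h).mul Lcont).continuousOn).div
      ((hqc.pow 2).continuousOn) hq2ne
  have int3 : IntervalIntegrable (fun θ =>
      (-(K * ellSin ω₀ h)) * (prim (fun u => q K r u ω) (fun u => l u ω) θ * Real.cos θ))
      MeasureTheory.volume 0 (2 * Real.pi) :=
    (continuous_const.mul (Lcont.mul Real.continuous_cos)).intervalIntegrable _ _
  have int4 : IntervalIntegrable (fun θ =>
      (-CC) * (prim (fun u => q K r u ω) (fun u => l u ω) θ / q K r θ ω))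
      MeasureTheory.volume 0 (2 * Real.pi) := by
    apply ContinuousOn.intervalIntegrable
    exact ContinuousOn.mul continuousOn_const
      (Lcont.continuousOn.div hqc.continuousOn (q_ne K r ω))
  rw [intervalIntegral.integral_add (((int1.add int2).add int3)) int4,
    intervalIntegral.integral_add (int1.add int2) int3,
    intervalIntegral.integral_add int1 int2]
  -- evaluate the four integrals
  -- I4 = 0
  have hI4 : (∫ θ in (0:ℝ)..(2 * Real.pi),
      (-CC) * (prim (fun u => q K r u ω) (fun u => l u ω) θ / q K r θ ω)) = 0 := by
    rw [intervalIntegral.integral_const_mul, prim_int_zero K r ω (fun u => l u ω) lc,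
      mul_zero]
  -- I1 via integration by parts
  have hibp1 := ibp_per (prim (fun u => q K r u ω) (fun u => l u ω))
      (fun θ => h θ ω / q K r θ ω) (fun θ => l θ ω)
      (fun θ => (deriv (fun u => h u ω) θ * q K r θ ω - h θ ω * Dq K r ω θ) / q K r θ ω ^ 2)
      (fun x _ => hLd x)
      (fun x hx => (hd1 x).hasDerivAt.div (hasDerivAt_q K r ω x) (q_ne K r ω x hx))
      (lc.intervalIntegrable _ _)
      (by
        apply ContinuousOn.intervalIntegrable
        exact (((cont_dh.mul hqc).sub (cont_h.mul contDq)).continuousOn).div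
          ((hqc.pow 2).continuousOn) hq2ne)
      (by rw [Lbd, e1, e2])
  have hI1 : (∫ θ in (0:ℝ)..(2 * Real.pi),
      (1 / 2) * (prim (fun u => q K r u ω) (fun u => l u ω) θ *
        ((deriv (fun u => h u ω) θ * q K r θ ω - h θ ω * Dq K r ω θ) / q K r θ ω ^ 2))) =
      -(1 / 2) * ∫ θ in (0:ℝ)..(2 * Real.pi), h θ ω * l θ ω / q K r θ ω := by
    rw [intervalIntegral.integral_const_mul, hibp1]
    have : (∫ x in (0:ℝ)..(2 * Real.pi), l x ω * (h x ω / q K r x ω)) =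
        ∫ θ in (0:ℝ)..(2 * Real.pi), h θ ω * l θ ω / q K r θ ω :=
      intervalIntegral.integral_congr (fun θ _ => by ring)
    rw [this]
    ring
  -- I3 via integration by parts against sin
  have hibp3 := ibp_per (prim (fun u => q K r u ω) (fun u => l u ω)) Real.sin
      (fun θ => l θ ω) Real.cos
      (fun x _ => hLd x) (fun x _ => Real.hasDerivAt_sin x)
      (lc.intervalIntegrable _ _) (Real.continuous_cos.intervalIntegrable _ _)
      (by rw [Real.sin_two_pi, Real.sin_zero, mul_zero, mul_zero])
  have hI3 : (∫ θ in (0:ℝ)..(2 * Real.pi),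
      (-(K * ellSin ω₀ h)) * (prim (fun u => q K r u ω) (fun u => l u ω) θ * Real.cos θ)) =
      K * ellSin ω₀ h * ∫ θ in (0:ℝ)..(2 * Real.pi), l θ ω * Real.sin θ := by
    rw [intervalIntegral.integral_const_mul, hibp3]
    have : (∫ x in (0:ℝ)..(2 * Real.pi), l x ω * Real.sin x) =
        ∫ θ in (0:ℝ)..(2 * Real.pi), l θ ω * Real.sin θ := rfl
    rw [this]
    ring
  rw [hI1, hI3, hI4]
  ring

/-- Decomposition of the Dirichlet form of the linearized operator. -/
theorem stmt9 (K ω₀ r : ℝ) (hK : 0 < K) (hω₀ : 0 < ω₀) (hr : 0 < r)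
    (hfix : r = psiMu ω₀ (2 * K * r)) (h l : ℝ → ℝ → ℝ)
    (hper : ∀ ω ∈ ({-ω₀, ω₀} : Set ℝ), Function.Periodic (fun θ => h θ ω) (2 * Real.pi))
    (hsm : ∀ ω ∈ ({-ω₀, ω₀} : Set ℝ), ContDiff ℝ (⊤ : ℕ∞) (fun θ => h θ ω))
    (hodd : ∀ θ : ℝ, ∀ ω ∈ ({-ω₀, ω₀} : Set ℝ), h (-θ) (-ω) = -h θ ω)
    (hmean : ∀ ω ∈ ({-ω₀, ω₀} : Set ℝ), (∫ θ in (0:ℝ)..(2 * Real.pi), h θ ω) = 0)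
    (lper : ∀ ω ∈ ({-ω₀, ω₀} : Set ℝ), Function.Periodic (fun θ => l θ ω) (2 * Real.pi))
    (lsm : ∀ ω ∈ ({-ω₀, ω₀} : Set ℝ), ContDiff ℝ (⊤ : ℕ∞) (fun θ => l θ ω))
    (lodd : ∀ θ : ℝ, ∀ ω ∈ ({-ω₀, ω₀} : Set ℝ), l (-θ) (-ω) = -l θ ω)
    (lmean : ∀ ω ∈ ({-ω₀, ω₀} : Set ℝ), (∫ θ in (0:ℝ)..(2 * Real.pi), l θ ω) = 0) :
    pairMu K r ω₀ (fun θ ω => Lop K ω₀ r h θ ω) l =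
      Gam K r ω₀ h l + K * ellSin ω₀ h * ellSin ω₀ l := by
  have memm : (-ω₀) ∈ ({-ω₀, ω₀} : Set ℝ) := Set.mem_insert _ _
  have memp : ω₀ ∈ ({-ω₀, ω₀} : Set ℝ) := Set.mem_insert_of_mem _ rfl
  have hJh : ∀ u : ℝ, Jconv K ω₀ h u = K * ellSin ω₀ h * Real.cos u :=
    Jh_eq K ω₀ h ((hsm _ memm).continuous) ((hsm _ memp).continuous)
      (hper _ memm) (hper _ memp)
      (cosh_sum ω₀ h (hper _ memp) (fun θ => hodd θ ω₀ memp))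
  have hm := main_per_omega K ω₀ r (-ω₀) hfix h l (hsm _ memm) (hper _ memm)
    ((lsm _ memm).continuous) (lmean _ memm) hJh
  have hp := main_per_omega K ω₀ r ω₀ hfix h l (hsm _ memp) (hper _ memp)
    ((lsm _ memp).continuous) (lmean _ memp) hJh
  unfold pairMu
  rw [hm, hp]
  unfold Gam ellSin
  ring
end
end
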